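/- arXiv:2412.06223 — 4 statements merged into one kernel-verified Lean document; each statement's English description precedes it below -/
import Mathlib

section
/- Let q ≥ 2 and let t, w, e be positive integers with e ≤ w − 1 and 2·binom(w, w−e) ≥ binom(w−t−1, w−e) + binom(w+t, w−e), and let n ≥ t. Then every q-ary (n, t, w, e)-LPECC code of size b satisfies, as an inequality of rational numbers, b ≤ [ (q−1)^{w−e}·binom(n, w−e) + binom(w+t, w−e) · Σ_{k=0}^{w−e−1} (q−1)^{k}·binom(n, k)/binom(k+e, k) ] / binom(w+t, w−e). -/
open Finset

/-- The support of a `q`-ary word `x : Fin n → Fin q`. -/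
def qsupp {n q : ℕ} (x : Fin n → Fin q) : Finset (Fin n) :=
  Finset.univ.filter fun i => (x i : ℕ) ≠ 0

/-- The (Hamming) weight of a `q`-ary word. -/
def qwt {n q : ℕ} (x : Fin n → Fin q) : ℕ := (qsupp x).card

/-- A `q`-ary `(n,t,w,e)`-LPECC code of size `b`: pairwise disjoint nonempty
codesets `P i ⊆ Q^n` satisfying Properties A_q(t), B_q(w), C_q(e). -/
def IsQaryLPECC (q n t w e : ℕ) {b : ℕ}
    (P : Fin b → Finset (Fin n → Fin q)) : Prop :=
  (∀ i, (P i).Nonempty) ∧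
  (∀ i j : Fin b, i ≠ j → Disjoint (P i) (P j)) ∧
  (∀ T : Finset (Fin n), T.card = t → ∀ i, ∃ x ∈ P i, Disjoint (qsupp x) T) ∧
  (∀ i, ∀ x ∈ P i, qwt x ≤ w) ∧
  (∀ i j : Fin b, i ≠ j → ∀ x ∈ P i, ∀ y ∈ P j, 2 * e + 1 ≤ hammingDist x y)

namespace LPECC
variable {n q : ℕ} [NeZero q]

theorem mem_qsupp {x : Fin n → Fin q} {i : Fin n} : i ∈ qsupp x ↔ x i ≠ 0 := by
  simp only [qsupp, mem_filter, mem_univ, true_and, ne_eq, Fin.val_eq_zero_iff]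

def res (x : Fin n → Fin q) (S : Finset (Fin n)) : Fin n → Fin q :=
  fun i => if i ∈ S then x i else 0

theorem res_apply_mem {x : Fin n → Fin q} {S : Finset (Fin n)} {i : Fin n} (h : i ∈ S) :
    res x S i = x i := if_pos h

theorem res_apply_not_mem {x : Fin n → Fin q} {S : Finset (Fin n)} {i : Fin n} (h : i ∉ S) :
    res x S i = 0 := if_neg h

theorem qsupp_res {x : Fin n → Fin q} {S : Finset (Fin n)} (h : S ⊆ qsupp x) :
    qsupp (res x S) = S := by
  ext i
  by_cases hi : i ∈ S
  · have hx : x i ≠ 0 := mem_qsupp.1 (h hi)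
    simp only [mem_qsupp, res, if_pos hi, hi, iff_true]
    exact hx
  · simp [mem_qsupp, res, if_neg hi, hi]

theorem qwt_res {x : Fin n → Fin q} {S : Finset (Fin n)} (h : S ⊆ qsupp x) :
    qwt (res x S) = S.card := by rw [qwt, qsupp_res h]

theorem hammingDist_res {x : Fin n → Fin q} {S : Finset (Fin n)} (h : S ⊆ qsupp x) :
    hammingDist x (res x S) = qwt x - S.card := by
  have h1 : (Finset.univ.filter fun i => x i ≠ res x S i) = qsupp x \ S := by
    ext i
    by_cases hi : i ∈ S
    · simp [res_apply_mem hi, hi]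
    · simp [res_apply_not_mem hi, hi, mem_qsupp]
  rw [hammingDist, h1, card_sdiff_of_subset h, qwt]

theorem res_congr {x y : Fin n → Fin q} {S : Finset (Fin n)} (h : ∀ i ∈ S, x i = y i) :
    res x S = res y S := by
  funext i
  by_cases hi : i ∈ S
  · rw [res_apply_mem hi, res_apply_mem hi, h i hi]
  · rw [res_apply_not_mem hi, res_apply_not_mem hi]

def agr (x y : Fin n → Fin q) : Finset (Fin n) :=
  Finset.univ.filter fun i => x i = y i ∧ x i ≠ 0

theorem mem_agr {x y : Fin n → Fin q} {i : Fin n} :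
    i ∈ agr x y ↔ x i = y i ∧ x i ≠ 0 := by simp [agr]

theorem card_fix_supp (hq : 2 ≤ q) (S : Finset (Fin n)) :
    ((univ : Finset (Fin n → Fin q)).filter fun z => qsupp z = S).card ≤ (q-1) ^ S.card := by
  classical
  have hcard : Fintype.card {v : Fin q // v ≠ 0} = q - 1 := by
    have h1 : Fintype.card {v : Fin q // v = 0} = 1 := Fintype.card_subtype_eq (0 : Fin q)
    have h2 := Fintype.card_subtype_compl (fun v : Fin q => v = 0)
    simp only [Fintype.card_fin, h1] at h2
    exact h2
  have hpi : Fintype.card ((i : {i // i ∈ S}) → {v : Fin q // v ≠ 0}) = (q-1) ^ S.card := by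
    rw [Fintype.card_pi]
    simp [hcard, Finset.prod_const, Finset.card_univ]
  have hone : (1 : Fin q) ≠ 0 := by
    have : ((1 : Fin q) : ℕ) = 1 := by
      rw [Fin.val_one']
      exact Nat.mod_eq_of_lt (by omega)
    intro h
    rw [h] at this
    simp at this
  calc ((univ : Finset (Fin n → Fin q)).filter fun z => qsupp z = S).card
      ≤ (univ : Finset ((i : {i // i ∈ S}) → {v : Fin q // v ≠ 0})).card := by
        refine Finset.card_le_card_of_injOn
          (fun z => fun i => if h : z i.1 = 0 then ⟨(1 : Fin q), hone⟩ else ⟨z i.1, h⟩)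
          (fun _ _ => mem_univ _) ?_
        intro z1 h1 z2 h2 heq
        simp only [mem_coe, mem_filter] at h1 h2
        funext i
        by_cases hi : i ∈ S
        · have hz1 : z1 i ≠ 0 := mem_qsupp.1 (h1.2 ▸ hi)
          have hz2 : z2 i ≠ 0 := mem_qsupp.1 (h2.2 ▸ hi)
          have := congrFun heq ⟨i, hi⟩
          simp only [dif_neg hz1, dif_neg hz2] at this
          exact Subtype.mk_eq_mk.1 this
        · have hz1 : z1 i = 0 := by
            by_contra hc
            exact hi (h1.2 ▸ mem_qsupp.2 hc)
          have hz2 : z2 i = 0 := by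
            by_contra hc
            exact hi (h2.2 ▸ mem_qsupp.2 hc)
          rw [hz1, hz2]
    _ = (q-1) ^ S.card := by rw [Finset.card_univ, hpi]

theorem card_wt_le (hq : 2 ≤ q) (j : ℕ) :
    ((univ : Finset (Fin n → Fin q)).filter fun z => qwt z = j).card ≤
      n.choose j * (q-1) ^ j := by
  classical
  have hsub : ((univ : Finset (Fin n → Fin q)).filter fun z => qwt z = j) ⊆
      (powersetCard j (univ : Finset (Fin n))).biUnion
        (fun S => (univ : Finset (Fin n → Fin q)).filter fun z => qsupp z = S) := by
    intro z hz
    simp only [mem_filter, mem_univ, true_and] at hz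
    rw [mem_biUnion]
    exact ⟨qsupp z, by
      rw [mem_powersetCard]
      exact ⟨subset_univ _, hz⟩, by simp⟩
  calc ((univ : Finset (Fin n → Fin q)).filter fun z => qwt z = j).card
      ≤ ((powersetCard j (univ : Finset (Fin n))).biUnion
          (fun S => (univ : Finset (Fin n → Fin q)).filter fun z => qsupp z = S)).card :=
        card_le_card hsub
    _ ≤ ∑ S ∈ powersetCard j (univ : Finset (Fin n)),
          ((univ : Finset (Fin n → Fin q)).filter fun z => qsupp z = S).card :=
        card_biUnion_le
    _ ≤ ∑ S ∈ powersetCard j (univ : Finset (Fin n)), (q-1)^j := by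
        refine Finset.sum_le_sum ?_
        intro S hS
        have hSc : S.card = j := (mem_powersetCard.1 hS).2
        calc ((univ : Finset (Fin n → Fin q)).filter fun z => qsupp z = S).card
            ≤ (q-1) ^ S.card := card_fix_supp hq S
          _ = (q-1)^j := by rw [hSc]
    _ = n.choose j * (q-1)^j := by
        rw [Finset.sum_const, Finset.card_powersetCard, Finset.card_univ, Fintype.card_fin,
          smul_eq_mul]


/-- the weight function for the double counting -/
noncomputable def mu (q n t w e : ℕ) (z : Fin n → Fin q) : ℚ :=
  if qwt z = w - e then 1
  else ((w + t).choose (w - e) : ℚ) / (((qwt z + e).choose (qwt z) : ℕ) : ℚ)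

theorem mu_nonneg (t w e : ℕ) (z : Fin n → Fin q) : 0 ≤ mu q n t w e z := by
  unfold mu
  split
  · norm_num
  · positivity

theorem card_img {x : Fin n → Fin q} {j : ℕ} :
    ((powersetCard j (qsupp x)).image (res x)).card = (qwt x).choose j := by
  have hinj : Set.InjOn (res x) (powersetCard j (qsupp x)) := by
    intro S1 h1 S2 h2 heq
    rw [mem_coe, mem_powersetCard] at h1 h2
    rw [← qsupp_res h1.1, heq, qsupp_res h2.1]
  rw [Finset.card_image_of_injOn hinj, Finset.card_powersetCard, qwt]

theorem mem_img {x z : Fin n → Fin q} {j : ℕ}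
    (hz : z ∈ (powersetCard j (qsupp x)).image (res x)) :
    qwt z = j ∧ hammingDist x z = qwt x - j := by
  rw [mem_image] at hz
  obtain ⟨S, hS, rfl⟩ := hz
  rw [mem_powersetCard] at hS
  refine ⟨by rw [qwt_res hS.1, hS.2], by rw [hammingDist_res hS.1, hS.2]⟩

section arith


/-- `m^k * C(w,k) ≤ w^k * C(m,k)` for `w ≤ m`. -/
theorem aux_pow (w m : ℕ) (hwm : w ≤ m) :
    ∀ k : ℕ, m ^ k * w.choose k ≤ w ^ k * m.choose k := by
  intro k
  induction k with
  | zero => simp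
  | succ k ih =>
    by_cases hk : k + 1 ≤ w
    · obtain ⟨a, ha⟩ : ∃ a, w = k + a + 1 := ⟨w - k - 1, by omega⟩
      obtain ⟨c, hc⟩ : ∃ c, m = w + c := ⟨m - w, by omega⟩
      have h1 := Nat.choose_succ_right_eq m k
      have h2 := Nat.choose_succ_right_eq w k
      refine Nat.le_of_mul_le_mul_right ?_ (Nat.succ_pos k)
      have e1 : m ^ (k+1) * w.choose (k+1) * (k+1) = m ^ (k+1) * (w.choose k * (w - k)) := by
        rw [mul_assoc, h2]
      have e2 : w ^ (k+1) * m.choose (k+1) * (k+1) = w ^ (k+1) * (m.choose k * (m - k)) := by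
        rw [mul_assoc, h1]
      rw [e1, e2]
      have hwk : w - k = a + 1 := by omega
      have hmk : m - k = a + 1 + c := by omega
      rw [hwk, hmk]
      have step1 : m ^ (k+1) * (w.choose k * (a+1)) = (m ^ k * w.choose k) * (m * (a+1)) := by
        ring
      have step2 : w ^ (k+1) * (m.choose k * (a+1+c)) = (w ^ k * m.choose k) * (w * (a+1+c)) := by
        ring
      rw [step1, step2]
      have hmul : m * (a+1) ≤ w * (a+1+c) := by nlinarith
      calc (m ^ k * w.choose k) * (m * (a+1)) ≤ (w ^ k * m.choose k) * (m * (a+1)) :=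
              Nat.mul_le_mul_right _ ih
        _ ≤ (w ^ k * m.choose k) * (w * (a+1+c)) := Nat.mul_le_mul_left _ hmul
    · have : w.choose (k+1) = 0 := Nat.choose_eq_zero_of_lt (by omega)
      simp [this]

/-- `(m-k+1) * C(w,k) ≤ (w-k+1) * C(m,k)` for `1 ≤ k ≤ w ≤ m`. -/
theorem aux_ratio (w k : ℕ) (hk1 : 1 ≤ k) (hkw : k ≤ w) :
    ∀ m, w ≤ m → (m - k + 1) * w.choose k ≤ (w - k + 1) * m.choose k := by
  intro m
  induction m with
  | zero => intro h; exact absurd (hk1.trans (hkw.trans h)) (by omega)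
  | succ m ih =>
    intro hm
    by_cases hwm : w ≤ m
    · have IH := ih hwm
      have hpos : 0 < m + 1 - k := by omega
      refine Nat.le_of_mul_le_mul_right ?_ hpos
      have id1 : (w-k+1) * (m+1).choose k * (m+1-k) = (w-k+1) * (m.choose k * (m+1)) := by
        rw [mul_assoc, ← Nat.choose_mul_succ_eq m k]
      rw [id1]
      calc (m+1-k+1) * w.choose k * (m+1-k)
          = (m+1-k+1) * (w.choose k * (m+1-k)) := by ring
        _ ≤ (m+1) * (w.choose k * (m+1-k)) :=
            Nat.mul_le_mul_right _ (by omega)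
        _ = (m+1) * ((m+1-k) * w.choose k) := by ring
        _ = (m+1) * ((m-k+1) * w.choose k) := by rw [show m+1-k = m-k+1 by omega]
        _ ≤ (m+1) * ((w-k+1) * m.choose k) := Nat.mul_le_mul_left _ IH
        _ = (w-k+1) * (m.choose k * (m+1)) := by ring
    · obtain rfl : w = m + 1 := by omega
      exact le_refl _

theorem two_lt_three_pow : ∀ k, 2 ≤ k → 2 ^ (k+1) < 3 ^ k := by
  intro k
  induction k with
  | zero => omega
  | succ k ih =>
    intro hk
    by_cases h2 : 2 ≤ k
    · have := ih h2
      calc 2^(k+2) = 2 * 2^(k+1) := by ring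
        _ < 2 * 3^k := by omega
        _ ≤ 3^(k+1) := by ring_nf; omega
    · obtain rfl : k = 1 := by omega
      norm_num

/-- From `hcond`, `k ≥ 2` forces `w ≥ 2t+1`. -/
theorem hc_big (w t k : ℕ) (hk2 : 2 ≤ k) (hkw : k ≤ w) (hw1 : 1 ≤ w)
    (hcond : (w+t).choose k ≤ 2 * w.choose k) (hwt : w ≤ 2 * t) : False := by
  have A := aux_pow w (w+t) (by omega) k
  have B : (3*w)^k ≤ (2*(w+t))^k := Nat.pow_le_pow_left (by omega) k
  have B' : 3^k * w^k ≤ 2^k * (w+t)^k := by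
    calc 3^k * w^k = (3*w)^k := by rw [mul_pow]
      _ ≤ (2*(w+t))^k := B
      _ = 2^k * (w+t)^k := by rw [mul_pow]
  have hcpos : 0 < w.choose k := Nat.choose_pos hkw
  have hwpos : 0 < w ^ k := Nat.pow_pos hw1
  have chain : 3^k * (w^k * w.choose k) ≤ 2^(k+1) * (w^k * w.choose k) := by
    calc 3^k * (w^k * w.choose k) = (3^k * w^k) * w.choose k := by ring
      _ ≤ (2^k * (w+t)^k) * w.choose k := Nat.mul_le_mul_right _ B'
      _ = 2^k * ((w+t)^k * w.choose k) := by ring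
      _ ≤ 2^k * (w^k * (w+t).choose k) := Nat.mul_le_mul_left _ A
      _ ≤ 2^k * (w^k * (2 * w.choose k)) := by
          refine Nat.mul_le_mul_left _ (Nat.mul_le_mul_left _ hcond)
      _ = 2^(k+1) * (w^k * w.choose k) := by ring
  have hlt := two_lt_three_pow k hk2
  have hpos : 0 < w^k * w.choose k := Nat.mul_pos hwpos hcpos
  nlinarith

/-- From `hcond`, `t ≤ w - k + 1`. -/
theorem hc_t (w t k : ℕ) (hk1 : 1 ≤ k) (hkw : k ≤ w)
    (hcond : (w+t).choose k ≤ 2 * w.choose k) (hge : w - k + 2 ≤ t) : False := by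
  have A := aux_ratio w k hk1 hkw (w+t) (by omega)
  have h1 : 2 * (w - k + 1) + 1 ≤ w + t - k + 1 := by omega
  have hcpos : 0 < w.choose k := Nat.choose_pos hkw
  have chain : (2 * (w-k+1) + 1) * w.choose k ≤ (w-k+1) * (2 * w.choose k) := by
    calc (2 * (w-k+1) + 1) * w.choose k ≤ (w+t-k+1) * w.choose k :=
          Nat.mul_le_mul_right _ h1
      _ ≤ (w-k+1) * (w+t).choose k := A
      _ ≤ (w-k+1) * (2 * w.choose k) := Nat.mul_le_mul_left _ hcond
  nlinarith

end arith

theorem class_bound {t w e : ℕ} (hq : 2 ≤ q) (ht : 1 ≤ t) (he : 1 ≤ e)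
    (hew : e + 1 ≤ w)
    (hcond : (w - t - 1).choose (w - e) + (w + t).choose (w - e) ≤ 2 * w.choose (w - e))
    (hn : t ≤ n)
    (C : Finset (Fin n → Fin q)) (hne : C.Nonempty)
    (hwt : ∀ x ∈ C, qwt x ≤ w)
    (hA : ∀ T : Finset (Fin n), T.card = t → ∃ x ∈ C, Disjoint (qsupp x) T) :
    ∃ E : Finset (Fin n → Fin q),
      (∀ z ∈ E, qwt z ≤ w - e ∧ ∃ x ∈ C, hammingDist x z ≤ e) ∧
      (((w + t).choose (w - e) : ℕ) : ℚ) ≤ ∑ z ∈ E, mu q n t w e z := by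
  classical
  set k := w - e with hk
  have hk1 : 1 ≤ k := by omega
  have hkw : k ≤ w := by omega
  by_cases hlow : ∃ x ∈ C, qwt x < w
  · -- easy branch: some codeword of weight < w
    obtain ⟨x, hxC, hxw⟩ := hlow
    set u := qwt x with hu
    set j0 := u - e with hj0
    refine ⟨(powersetCard j0 (qsupp x)).image (res x), ?_, ?_⟩
    · intro z hz
      obtain ⟨hz1, hz2⟩ := mem_img hz
      exact ⟨by omega, x, hxC, by omega⟩
    · have hall : ∀ z ∈ (powersetCard j0 (qsupp x)).image (res x),
          mu q n t w e z = ((w + t).choose k : ℚ) / (((j0 + e).choose j0 : ℕ) : ℚ) := by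
        intro z hz
        obtain ⟨hz1, _⟩ := mem_img hz
        rw [mu, hz1, if_neg (by omega)]
      rw [Finset.sum_congr rfl hall, Finset.sum_const, card_img, nsmul_eq_mul]
      have hud : (j0 + e).choose j0 ≤ u.choose j0 := by
        rcases le_or_gt e u with h | h
        · have : j0 + e = u := by omega
          rw [this]
        · have : j0 = 0 := by omega
          simp [this]
      have hpos : (0:ℚ) < (((j0 + e).choose j0 : ℕ) : ℚ) := by
        have := Nat.choose_pos (show j0 ≤ j0 + e by omega)
        exact_mod_cast this
      rw [← hu]
      have h1 : (1:ℚ) ≤ ((u.choose j0 : ℕ) : ℚ) / (((j0 + e).choose j0 : ℕ) : ℚ) := by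
        rw [le_div_iff₀ hpos, one_mul]
        exact_mod_cast hud
      calc (((w + t).choose k : ℕ) : ℚ) = (((w + t).choose k : ℕ) : ℚ) * 1 := by ring
        _ ≤ (((w + t).choose k : ℕ) : ℚ) *
            (((u.choose j0 : ℕ) : ℚ) / (((j0 + e).choose j0 : ℕ) : ℚ)) :=
            mul_le_mul_of_nonneg_left h1 (by positivity)
        _ = ((u.choose j0 : ℕ) : ℚ) *
            ((((w + t).choose k : ℕ) : ℚ) / (((j0 + e).choose j0 : ℕ) : ℚ)) := by ring
  · -- all codewords have weight exactly w
    have hall : ∀ x ∈ C, qwt x = w := by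
      intro x hx
      have := hwt x hx
      by_contra hc
      exact hlow ⟨x, hx, by omega⟩
    by_cases caseA : ∃ x ∈ C, ∃ y ∈ C, ((agr x y).card).choose k ≤ (w - t - 1).choose k
    · -- two codewords with small matched intersection
      obtain ⟨x, hxC, y, hyC, hAg⟩ := caseA
      set E := ((powersetCard k (qsupp x)).image (res x)) ∪
               ((powersetCard k (qsupp y)).image (res y)) with hE
      refine ⟨E, ?_, ?_⟩
      · intro z hz
        rw [hE, mem_union] at hz
        rcases hz with hz | hz
        · obtain ⟨h1, h2⟩ := mem_img hz
          exact ⟨by omega, x, hxC, by rw [h2, hall x hxC]; omega⟩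
        · obtain ⟨h1, h2⟩ := mem_img hz
          exact ⟨by omega, y, hyC, by rw [h2, hall y hyC]; omega⟩
      · have hmu : ∀ z ∈ E, mu q n t w e z = 1 := by
          intro z hz
          rw [hE, mem_union] at hz
          rcases hz with hz | hz <;>
            · obtain ⟨h1, _⟩ := mem_img hz
              rw [mu, if_pos (by omega)]
        rw [Finset.sum_congr rfl hmu, Finset.sum_const, nsmul_eq_mul, mul_one]
        have hcard : (w + t).choose k ≤ E.card := by
          have hinter : ((powersetCard k (qsupp x)).image (res x)) ∩
              ((powersetCard k (qsupp y)).image (res y)) ⊆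
              (powersetCard k (agr x y)).image (res x) := by
            intro z hz
            rw [mem_inter] at hz
            obtain ⟨hz1, hz2⟩ := hz
            rw [mem_image] at hz1 hz2
            obtain ⟨S, hS, rfl⟩ := hz1
            obtain ⟨S', hS', heq⟩ := hz2
            rw [mem_powersetCard] at hS hS'
            have hSS' : S = S' := by
              have e1 : qsupp (res x S) = S := qsupp_res hS.1
              have e2 : qsupp (res y S') = S' := qsupp_res hS'.1
              rw [← e1, ← heq, e2]
            rw [mem_image]
            refine ⟨S, ?_, rfl⟩
            rw [mem_powersetCard]
            refine ⟨?_, hS.2⟩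
            intro i hi
            rw [mem_agr]
            have h1 : x i = res x S i := (res_apply_mem hi).symm
            have h2 : y i = res y S' i := (res_apply_mem (hSS' ▸ hi)).symm
            refine ⟨?_, mem_qsupp.1 (hS.1 hi)⟩
            rw [h1, h2, heq]
          have hIcard : (((powersetCard k (qsupp x)).image (res x)) ∩
              ((powersetCard k (qsupp y)).image (res y))).card ≤ (w - t - 1).choose k := by
            calc (((powersetCard k (qsupp x)).image (res x)) ∩
                ((powersetCard k (qsupp y)).image (res y))).card
                ≤ ((powersetCard k (agr x y)).image (res x)).card := card_le_card hinter
              _ ≤ (powersetCard k (agr x y)).card := card_image_le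
              _ = ((agr x y).card).choose k := Finset.card_powersetCard _ _
              _ ≤ (w - t - 1).choose k := hAg
          have hu := Finset.card_union_add_card_inter
            ((powersetCard k (qsupp x)).image (res x))
            ((powersetCard k (qsupp y)).image (res y))
          have hcx : ((powersetCard k (qsupp x)).image (res x)).card = w.choose k := by
            rw [card_img, hall x hxC]
          have hcy : ((powersetCard k (qsupp y)).image (res y)).card = w.choose k := by
            rw [card_img, hall y hyC]
          rw [hcx, hcy] at hu
          rw [← hE] at hu
          omega
        exact_mod_cast hcard
    · -- Case B : all pairwise matched agreements are large
      push_neg at caseA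
      have hB : ∀ x ∈ C, ∀ y ∈ C, w - t ≤ (agr x y).card := by
        intro x hx y hy
        by_contra hcon
        push_neg at hcon
        have h1 : ((agr x y).card).choose k ≤ (w - t - 1).choose k :=
          Nat.choose_le_choose k (by omega)
        have h2 := caseA x hx y hy
        omega
      have htw : t + 1 ≤ w := by
        by_contra hcon
        push_neg at hcon
        obtain ⟨x0, hx0⟩ := hne
        obtain ⟨T, hTsub, hTcard⟩ := Finset.exists_superset_card_eq
          (s := qsupp x0) (n := t)
          (by have := hall x0 hx0; rw [qwt] at this; omega)
          (by rw [Fintype.card_fin]; exact hn)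
        obtain ⟨y, hyC, hyd⟩ := hA T hTcard
        have hagr0 : agr x0 y = ∅ := by
          ext i
          simp only [mem_agr, notMem_empty, iff_false, not_and]
          intro h1 h2
          have hi1 : i ∈ qsupp x0 := mem_qsupp.2 h2
          have hi2 : i ∈ qsupp y := mem_qsupp.2 (by rw [← h1]; exact h2)
          exact (Finset.disjoint_left.1 hyd) hi2 (hTsub hi1)
        have hcc := caseA x0 hx0 y hyC
        rw [hagr0, card_empty, Nat.choose_eq_zero_of_lt (show 0 < k by omega)] at hcc
        omega
      by_cases hk2 : 2 ≤ k
      · -- k ≥ 2 : full structure argument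
        have hcond' : (w + t).choose k ≤ 2 * w.choose k := by omega
        have hbig : 2 * t + 1 ≤ w := by
          by_contra hcon
          exact hc_big w t k hk2 hkw (by omega) hcond' (by omega)
        have hkt : t + k ≤ w + 1 := by
          by_contra hcon
          exact hc_t w t k hk1 hkw hcond' (by omega)
        obtain ⟨x0, hx0⟩ := hne
        set X := qsupp x0 with hX
        have hXw : X.card = w := hall x0 hx0
        have struct : ∀ T : Finset (Fin n), ∃ y, T ⊆ X → T.card = t →
            (y ∈ C ∧ Disjoint (qsupp y) T ∧ (∀ i ∈ X \ T, y i = x0 i) ∧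
             qsupp y ∩ X = X \ T ∧ (qsupp y \ X).card = t) := by
          intro T
          by_cases hT : T ⊆ X ∧ T.card = t
          · obtain ⟨y, hyC, hyd⟩ := hA T hT.2
            refine ⟨y, fun _ _ => ?_⟩
            have hagr : agr x0 y ⊆ X \ T := by
              intro i hi
              rw [mem_agr] at hi
              have hiX : i ∈ X := mem_qsupp.2 hi.2
              have hiy : i ∈ qsupp y := mem_qsupp.2 (by rw [← hi.1]; exact hi.2)
              exact mem_sdiff.2 ⟨hiX, fun hcon => (Finset.disjoint_left.1 hyd) hiy hcon⟩
            have hcXT : (X \ T).card = w - t := by rw [card_sdiff_of_subset hT.1, hXw, hT.2]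
            have heqa : agr x0 y = X \ T := by
              refine Finset.eq_of_subset_of_card_le hagr ?_
              rw [hcXT]
              exact hB x0 hx0 y hyC
            have hvals : ∀ i ∈ X \ T, y i = x0 i := by
              intro i hi
              rw [← heqa, mem_agr] at hi
              exact hi.1.symm
            have hinter : qsupp y ∩ X = X \ T := by
              apply Finset.Subset.antisymm
              · intro i hi
                rw [mem_inter] at hi
                exact mem_sdiff.2 ⟨hi.2, fun hcon => (Finset.disjoint_left.1 hyd) hi.1 hcon⟩
              · intro i hi
                have h1 : y i = x0 i := hvals i hi
                have h2 : i ∈ X := (mem_sdiff.1 hi).1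
                refine mem_inter.2 ⟨mem_qsupp.2 ?_, h2⟩
                rw [h1]
                exact mem_qsupp.1 h2
            have hBcard : (qsupp y \ X).card = t := by
              have h3 := Finset.card_sdiff_add_card_inter (qsupp y) X
              rw [hinter, hcXT] at h3
              have h4 : qwt y = w := hall y hyC
              rw [qwt] at h4
              omega
            exact ⟨hyC, hyd, hvals, hinter, hBcard⟩
          · exact ⟨x0, fun h1 h2 => absurd ⟨h1, h2⟩ hT⟩
        choose Y hY using struct
        set bres : Finset (Fin n) → (Fin n → Fin q) :=
          fun T => res (Y T) (qsupp (Y T) \ X) with hbres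
        have key : ∀ T T' : Finset (Fin n), T ⊆ X → T.card = t → T' ⊆ X → T'.card = t →
            Disjoint T T' → bres T = bres T' := by
          intro T T' h1 h2 h1' h2' hdisj
          obtain ⟨hyC, hyd, hyv, hyi, hyB⟩ := hY T h1 h2
          obtain ⟨hyC', hyd', hyv', hyi', hyB'⟩ := hY T' h1' h2'
          have hXpart : (agr (Y T) (Y T')) ∩ X ⊆ X \ (T ∪ T') := by
            intro i hi
            rw [mem_inter, mem_agr] at hi
            obtain ⟨⟨hv, hnz⟩, hiX⟩ := hi
            have hiy : i ∈ qsupp (Y T) := mem_qsupp.2 hnz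
            have hiy' : i ∈ qsupp (Y T') := mem_qsupp.2 (by rw [← hv]; exact hnz)
            refine mem_sdiff.2 ⟨hiX, ?_⟩
            rw [mem_union]
            rintro (hcon | hcon)
            · exact (Finset.disjoint_left.1 hyd) hiy hcon
            · exact (Finset.disjoint_left.1 hyd') hiy' hcon
          have hcXTT : (X \ (T ∪ T')).card = w - 2*t := by
            rw [card_sdiff_of_subset (union_subset h1 h1'), hXw, card_union_of_disjoint hdisj, h2, h2']
            omega
          have hM : t ≤ ((agr (Y T) (Y T')) \ X).card := by
            have h5 := Finset.card_inter_add_card_sdiff (agr (Y T) (Y T')) X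
            have h6 : ((agr (Y T) (Y T')) ∩ X).card ≤ w - 2*t := by
              rw [← hcXTT]
              exact card_le_card hXpart
            have h7 := hB (Y T) hyC (Y T') hyC'
            omega
          have hMB : (agr (Y T) (Y T')) \ X = qsupp (Y T) \ X := by
            refine Finset.eq_of_subset_of_card_le ?_ (by rw [hyB]; exact hM)
            intro i hi
            rw [mem_sdiff, mem_agr] at hi
            exact mem_sdiff.2 ⟨mem_qsupp.2 hi.1.2, hi.2⟩
          have hMB' : (agr (Y T) (Y T')) \ X = qsupp (Y T') \ X := by
            refine Finset.eq_of_subset_of_card_le ?_ (by rw [hyB']; exact hM)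
            intro i hi
            rw [mem_sdiff, mem_agr] at hi
            refine mem_sdiff.2 ⟨mem_qsupp.2 ?_, hi.2⟩
            rw [← hi.1.1]
            exact hi.1.2
          have hEqB : qsupp (Y T) \ X = qsupp (Y T') \ X := hMB.symm.trans hMB'
          funext i
          simp only [hbres]
          by_cases hi : i ∈ qsupp (Y T) \ X
          · have hi2 : i ∈ qsupp (Y T') \ X := by rw [← hEqB]; exact hi
            have hiagr : i ∈ agr (Y T) (Y T') := by
              have : i ∈ (agr (Y T) (Y T')) \ X := by rw [hMB]; exact hi
              exact (mem_sdiff.1 this).1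
            rw [res_apply_mem hi, res_apply_mem hi2]
            exact (mem_agr.1 hiagr).1
          · have hi2 : i ∉ qsupp (Y T') \ X := by rw [← hEqB]; exact hi
            rw [res_apply_not_mem hi, res_apply_not_mem hi2]
        have key2 : ∀ T T' : Finset (Fin n), T ⊆ X → T.card = t → T' ⊆ X → T'.card = t →
            (T ∪ T').card ≤ w - t → bres T = bres T' := by
          intro T T' h1 h2 h1' h2' hcard
          obtain ⟨S, hS1, hS2⟩ := Finset.exists_subset_card_eq
            (show t ≤ (X \ (T ∪ T')).card by
              rw [card_sdiff_of_subset (union_subset h1 h1'), hXw]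
              omega)
          have hSX : S ⊆ X := hS1.trans sdiff_subset
          have hdT : Disjoint T S := Finset.disjoint_left.2
            (fun {a} ha hcon => ((mem_sdiff.1 (hS1 hcon)).2 (mem_union_left _ ha)))
          have hdT' : Disjoint T' S := Finset.disjoint_left.2
            (fun {a} ha hcon => ((mem_sdiff.1 (hS1 hcon)).2 (mem_union_right _ ha)))
          exact (key T S h1 h2 hSX hS2 hdT).trans (key T' S h1' h2' hSX hS2 hdT').symm
        have main : ∀ m : ℕ, ∀ T T' : Finset (Fin n), T ⊆ X → T.card = t → T' ⊆ X →
            T'.card = t → (T \ T').card ≤ m → bres T = bres T' := by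
          intro m
          induction m with
          | zero =>
            intro T T' h1 h2 h1' h2' hcd
            have hsub : T ⊆ T' := by
              rw [← Finset.sdiff_eq_empty_iff_subset]
              exact card_eq_zero.1 (by omega)
            rw [Finset.eq_of_subset_of_card_le hsub (by omega)]
          | succ m ih =>
            intro T T' h1 h2 h1' h2' hcd
            by_cases h0 : (T \ T').card = 0
            · exact ih T T' h1 h2 h1' h2' (by omega)
            · have hne1 : (T \ T').Nonempty := card_pos.1 (by omega)
              obtain ⟨a, ha⟩ := hne1
              have hne2 : (T' \ T).Nonempty := by
                rw [← card_pos]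
                have e1 := Finset.card_sdiff_add_card_inter T T'
                have e2 := Finset.card_sdiff_add_card_inter T' T
                rw [Finset.inter_comm] at e2
                omega
              obtain ⟨bb, hbb⟩ := hne2
              have haT : a ∈ T := (mem_sdiff.1 ha).1
              have hbT' : bb ∈ T' := (mem_sdiff.1 hbb).1
              have hbT : bb ∉ T := (mem_sdiff.1 hbb).2
              set T1 := insert bb (T.erase a) with hT1
              have hT1sub : T1 ⊆ X := by
                intro i hi
                rw [hT1, mem_insert] at hi
                rcases hi with rfl | hi
                · exact h1' hbT'
                · exact h1 (Finset.erase_subset _ _ hi)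
              have hT1card : T1.card = t := by
                rw [hT1, card_insert_of_notMem (fun hcon => hbT (Finset.erase_subset _ _ hcon)),
                  card_erase_of_mem haT, h2]
                omega
              have hstep : bres T = bres T1 := by
                refine key2 T T1 h1 h2 hT1sub hT1card ?_
                have hsub : T ∪ T1 ⊆ insert bb T := by
                  intro i hi
                  rw [mem_union] at hi
                  rcases hi with hi | hi
                  · exact mem_insert_of_mem hi
                  · rw [hT1, mem_insert] at hi
                    rcases hi with rfl | hi
                    · exact mem_insert_self _ _
                    · exact mem_insert_of_mem (Finset.erase_subset _ _ hi)
                calc (T ∪ T1).card ≤ (insert bb T).card := card_le_card hsub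
                  _ ≤ t + 1 := by rw [card_insert_of_notMem hbT, h2]
                  _ ≤ w - t := by omega
              rw [hstep]
              refine ih T1 T' hT1sub hT1card h1' h2' ?_
              have hsub2 : T1 \ T' ⊆ (T \ T').erase a := by
                intro i hi
                rw [hT1, mem_sdiff, mem_insert] at hi
                obtain ⟨hi1, hi2⟩ := hi
                rcases hi1 with rfl | hi1
                · exact absurd hbT' hi2
                · exact Finset.mem_erase.2 ⟨(Finset.mem_erase.1 hi1).1,
                    mem_sdiff.2 ⟨(Finset.mem_erase.1 hi1).2, hi2⟩⟩
              calc (T1 \ T').card ≤ ((T \ T').erase a).card := card_le_card hsub2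
                _ = (T \ T').card - 1 := card_erase_of_mem ha
                _ ≤ m := by omega
        obtain ⟨T0, hT0sub, hT0card⟩ := Finset.exists_subset_card_eq
          (show t ≤ X.card by omega)
        obtain ⟨hy0C, hy0d, hy0v, hy0i, hy0B⟩ := hY T0 hT0sub hT0card
        set β := bres T0 with hbeta
        have hβsupp : qsupp β = qsupp (Y T0) \ X := by
          rw [hbeta]
          simp only [hbres]
          exact qsupp_res sdiff_subset
        have hβcard : (qsupp β).card = t := by rw [hβsupp, hy0B]
        have hβX : Disjoint X (qsupp β) := by
          rw [hβsupp]
          exact disjoint_sdiff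
        set c : Fin n → Fin q := fun i => if i ∈ X then x0 i else β i with hcdef
        have hcsupp : qsupp c = X ∪ qsupp β := by
          ext i
          by_cases hiX : i ∈ X
          · have h1 : c i = x0 i := if_pos hiX
            simp only [mem_qsupp, mem_union, h1]
            exact iff_of_true (mem_qsupp.1 (hX ▸ hiX)) (Or.inl hiX)
          · have h1 : c i = β i := if_neg hiX
            simp only [mem_qsupp, mem_union, h1]
            constructor
            · intro h
              exact Or.inr h
            · rintro (h | h)
              · exact absurd h hiX
              · exact h
        have hccard : (qsupp c).card = w + t := by
          rw [hcsupp, card_union_of_disjoint hβX, hXw, hβcard]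
        have hcover : ∀ S ∈ powersetCard k (qsupp c), ∃ x ∈ C, hammingDist x (res c S) ≤ e := by
          intro S hS
          rw [mem_powersetCard] at hS
          obtain ⟨hSsub, hScard⟩ := hS
          by_cases hSX : S ⊆ X
          · refine ⟨x0, hx0, ?_⟩
            have hres : res c S = res x0 S :=
              res_congr (fun i hi => if_pos (hSX hi))
            rw [hres, hammingDist_res (by rw [← hX]; exact hSX), hScard]
            have : qwt x0 = w := hall x0 hx0
            omega
          · obtain ⟨i0, hi0S, hi0X⟩ := Finset.not_subset.1 hSX
            have hSXcard : (S ∩ X).card < k := by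
              have hss : S ∩ X ⊂ S :=
                ⟨inter_subset_left, fun hcon => hi0X (mem_inter.1 (hcon hi0S)).2⟩
              calc (S ∩ X).card < S.card := card_lt_card hss
                _ = k := hScard
            obtain ⟨T, hTsub, hTcard⟩ := Finset.exists_subset_card_eq
              (show t ≤ (X \ S).card by
                have h7 := Finset.card_inter_add_card_sdiff X S
                have h8 : (X ∩ S).card = (S ∩ X).card := by rw [Finset.inter_comm]
                omega)
            have hTX : T ⊆ X := hTsub.trans sdiff_subset
            obtain ⟨hyC, hyd, hyv, hyi, hyB⟩ := hY T hTX hTcard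
            have hbT : bres T = β := main ((T \ T0).card) T T0 hTX hTcard hT0sub hT0card le_rfl
            have hSy : ∀ i ∈ S, c i = Y T i ∧ i ∈ qsupp (Y T) := by
              intro i hi
              by_cases hiX : i ∈ X
              · have hiT : i ∉ T := fun hcon => (mem_sdiff.1 (hTsub hcon)).2 hi
                have h1 : Y T i = x0 i := hyv i (mem_sdiff.2 ⟨hiX, hiT⟩)
                have h2 : c i = x0 i := if_pos hiX
                refine ⟨by rw [h1, h2], ?_⟩
                rw [mem_qsupp, h1]
                exact mem_qsupp.1 (hX ▸ hiX)
              · have hiβ : i ∈ qsupp β := by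
                  have h9 := hSsub hi
                  rw [hcsupp, mem_union] at h9
                  tauto
                have h2 : c i = β i := if_neg hiX
                have hβi : β i ≠ 0 := mem_qsupp.1 hiβ
                rw [← hbT] at hβi
                have h3 : bres T i = res (Y T) (qsupp (Y T) \ X) i := by simp only [hbres]
                rw [h3] at hβi
                by_cases him : i ∈ qsupp (Y T) \ X
                · refine ⟨?_, (mem_sdiff.1 him).1⟩
                  rw [h2, ← hbT, h3, res_apply_mem him]
                · exact absurd (res_apply_not_mem him) hβi
            have hres : res c S = res (Y T) S := res_congr (fun i hi => (hSy i hi).1)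
            have hSsuppy : S ⊆ qsupp (Y T) := fun i hi => (hSy i hi).2
            refine ⟨Y T, hyC, ?_⟩
            rw [hres, hammingDist_res hSsuppy, hScard]
            have : qwt (Y T) = w := hall _ hyC
            omega
        refine ⟨(powersetCard k (qsupp c)).image (res c), ?_, ?_⟩
        · intro z hz
          have h1 := (mem_img hz).1
          rw [mem_image] at hz
          obtain ⟨S, hS, rfl⟩ := hz
          exact ⟨by omega, hcover S hS⟩
        · have hmu : ∀ z ∈ (powersetCard k (qsupp c)).image (res c), mu q n t w e z = 1 := by
            intro z hz
            rw [mu, if_pos (by rw [(mem_img hz).1])]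
          rw [Finset.sum_congr rfl hmu, Finset.sum_const, nsmul_eq_mul, mul_one, card_img]
          have : qwt c = w + t := hccard
          rw [this]
      · -- k = 1 : union-of-supports argument
        have hkone : k = 1 := by omega
        set E := C.biUnion (fun x => (powersetCard 1 (qsupp x)).image (res x)) with hE
        have hmemE : ∀ z ∈ E, qwt z = 1 ∧ ∃ x ∈ C, hammingDist x z ≤ e := by
          intro z hz
          rw [hE, mem_biUnion] at hz
          obtain ⟨x, hxC, hz⟩ := hz
          obtain ⟨h1, h2⟩ := mem_img hz
          refine ⟨h1, x, hxC, ?_⟩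
          rw [h2, hall x hxC]
          omega
        refine ⟨E, fun z hz => ⟨by rw [(hmemE z hz).1]; omega, (hmemE z hz).2⟩, ?_⟩
        have hmu : ∀ z ∈ E, mu q n t w e z = 1 := by
          intro z hz
          rw [mu, if_pos (by rw [(hmemE z hz).1]; omega)]
        rw [Finset.sum_congr rfl hmu, Finset.sum_const, nsmul_eq_mul, mul_one]
        have hcard : w + t ≤ E.card := by
          by_contra hcon
          push_neg at hcon
          obtain ⟨x0, hx0⟩ := hne
          have himgsub : (powersetCard 1 (qsupp x0)).image (res x0) ⊆ E := by
            rw [hE]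
            intro z hz
            exact mem_biUnion.2 ⟨x0, hx0, hz⟩
          have himgcard : ((powersetCard 1 (qsupp x0)).image (res x0)).card = w := by
            rw [card_img, hall x0 hx0, Nat.choose_one_right]
          set Zext := E \ (powersetCard 1 (qsupp x0)).image (res x0) with hZext
          have hZcard : Zext.card ≤ t - 1 := by
            rw [hZext, card_sdiff_of_subset himgsub]
            omega
          set posExt := Zext.biUnion qsupp with hposE
          have hposcard : posExt.card ≤ t - 1 := by
            calc posExt.card ≤ ∑ z ∈ Zext, (qsupp z).card := card_biUnion_le
              _ = ∑ z ∈ Zext, 1 := by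
                  refine Finset.sum_congr rfl (fun z hz => ?_)
                  have hzE : z ∈ E := by
                    rw [hZext] at hz
                    exact (mem_sdiff.1 hz).1
                  exact (hmemE z hzE).1
              _ ≤ t - 1 := by
                  rw [Finset.sum_const, smul_eq_mul, mul_one]
                  exact hZcard
          have hp0 : ∃ p0 ∈ qsupp x0, p0 ∉ posExt := by
            by_contra hcon2
            push_neg at hcon2
            have h1 := card_le_card hcon2
            have h2 : qwt x0 = w := hall x0 hx0
            rw [qwt] at h2
            omega
          obtain ⟨p0, hp0supp, hp0pos⟩ := hp0
          obtain ⟨T, hTsub, hTcard⟩ := Finset.exists_superset_card_eq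
            (s := insert p0 posExt) (n := t)
            (by
              calc (insert p0 posExt).card ≤ posExt.card + 1 := card_insert_le _ _
                _ ≤ t := by omega)
            (by rw [Fintype.card_fin]; exact hn)
          obtain ⟨y, hyC, hyd⟩ := hA T hTcard
          have hysub : qsupp y ⊆ (qsupp x0).erase p0 := by
            intro j hj
            have hzE : res y {j} ∈ E := by
              rw [hE, mem_biUnion]
              refine ⟨y, hyC, mem_image.2 ⟨{j}, ?_, rfl⟩⟩
              rw [mem_powersetCard]
              exact ⟨singleton_subset_iff.2 hj, card_singleton j⟩
            have hjT : j ∉ T := fun hcon2 => (Finset.disjoint_left.1 hyd) hj hcon2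
            have hjpos : j ∉ posExt := fun hcon2 => hjT (hTsub (mem_insert_of_mem hcon2))
            have hjp0 : j ≠ p0 := fun hcon2 => hjT (hTsub (hcon2 ▸ mem_insert_self p0 posExt))
            have hznotext : res y {j} ∉ Zext := by
              intro hcon2
              apply hjpos
              rw [hposE]
              refine mem_biUnion.2 ⟨res y {j}, hcon2, ?_⟩
              rw [qsupp_res (singleton_subset_iff.2 hj)]
              exact mem_singleton_self j
            have hzimg : res y {j} ∈ (powersetCard 1 (qsupp x0)).image (res x0) := by
              by_contra hcon2
              apply hznotext
              rw [hZext]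
              exact mem_sdiff.2 ⟨hzE, hcon2⟩
            obtain ⟨S, hS, heq⟩ := mem_image.1 hzimg
            rw [mem_powersetCard] at hS
            have hSj : S = {j} := by
              rw [← qsupp_res hS.1, heq, qsupp_res (singleton_subset_iff.2 hj)]
            have hjx0 : j ∈ qsupp x0 := hS.1 (hSj ▸ mem_singleton_self j)
            exact Finset.mem_erase.2 ⟨hjp0, hjx0⟩
          have h1 := card_le_card hysub
          rw [card_erase_of_mem hp0supp] at h1
          have h2 : qwt y = w := hall y hyC
          have h3 : qwt x0 = w := hall x0 hx0
          rw [qwt] at h2 h3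
          omega
        rw [hkone, Nat.choose_one_right]
        exact_mod_cast hcard

end LPECC

open LPECC in
theorem qary_lpecc_upper_bound (q n t w e b : ℕ) (hq : 2 ≤ q) (ht : 1 ≤ t)
    (he : 1 ≤ e) (hew : e + 1 ≤ w)
    (hcond : (w - t - 1).choose (w - e) + (w + t).choose (w - e) ≤
      2 * w.choose (w - e))
    (hn : t ≤ n)
    (P : Fin b → Finset (Fin n → Fin q)) (hP : IsQaryLPECC q n t w e P) :
    (b : ℚ) ≤ (((q : ℚ) - 1) ^ (w - e) * (n.choose (w - e)) +
        ((w + t).choose (w - e)) *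
          ∑ k ∈ Finset.range (w - e),
            ((q : ℚ) - 1) ^ k * (n.choose k) / ((k + e).choose k)) /
      ((w + t).choose (w - e)) := by
  classical
  haveI : NeZero q := ⟨by omega⟩
  obtain ⟨hne, hdisjP, hA, hwt, hC⟩ := hP
  set kk := w - e with hkk
  have hk1 : 1 ≤ kk := by omega
  have hCpos : (0:ℚ) < (((w+t).choose kk : ℕ) : ℚ) := by
    exact_mod_cast Nat.choose_pos (show kk ≤ w + t by omega)
  set D : Fin b → Finset (Fin n → Fin q) := fun i =>
    (univ : Finset (Fin n → Fin q)).filter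
      (fun z => qwt z ≤ kk ∧ ∃ x ∈ P i, hammingDist x z ≤ e) with hD
  have hDdisj : Set.PairwiseDisjoint (↑(univ : Finset (Fin b)) : Set (Fin b)) D := by
    intro i _ j _ hij
    show Disjoint (D i) (D j)
    rw [Finset.disjoint_left]
    intro z hzi hzj
    simp only [hD, mem_filter, mem_univ, true_and] at hzi hzj
    obtain ⟨_, x, hx, hdx⟩ := hzi
    obtain ⟨_, y, hy, hdy⟩ := hzj
    have h1 := hC i j hij x hx y hy
    have h2 := hammingDist_triangle x z y
    have h3 : hammingDist z y = hammingDist y z := hammingDist_comm z y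
    omega
  have hper : ∀ i : Fin b, (((w+t).choose kk : ℕ) : ℚ) ≤ ∑ z ∈ D i, mu q n t w e z := by
    intro i
    obtain ⟨E, hE1, hE2⟩ := class_bound hq ht he hew hcond hn (P i) (hne i) (hwt i)
      (fun T hT => hA T hT i)
    refine le_trans hE2 (Finset.sum_le_sum_of_subset_of_nonneg ?_ ?_)
    · intro z hz
      simp only [hD, mem_filter, mem_univ, true_and]
      exact hE1 z hz
    · intro z _ _
      exact mu_nonneg t w e z
  set W : Finset (Fin n → Fin q) := (univ : Finset (Fin n → Fin q)).filter
      (fun z => qwt z ≤ kk) with hW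
  have hglobal : (b:ℚ) * (((w+t).choose kk : ℕ) : ℚ) ≤ ∑ z ∈ W, mu q n t w e z := by
    calc (b:ℚ) * (((w+t).choose kk : ℕ) : ℚ)
        = ∑ _i : Fin b, (((w+t).choose kk : ℕ) : ℚ) := by
          rw [Finset.sum_const, card_univ, Fintype.card_fin, nsmul_eq_mul]
      _ ≤ ∑ i : Fin b, ∑ z ∈ D i, mu q n t w e z := Finset.sum_le_sum (fun i _ => hper i)
      _ = ∑ z ∈ (univ : Finset (Fin b)).biUnion D, mu q n t w e z :=
          (Finset.sum_biUnion hDdisj).symm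
      _ ≤ ∑ z ∈ W, mu q n t w e z := by
          refine Finset.sum_le_sum_of_subset_of_nonneg ?_ (fun z _ _ => mu_nonneg t w e z)
          refine Finset.biUnion_subset.2 (fun i _ => ?_)
          intro z hz
          simp only [hD, mem_filter, mem_univ, true_and] at hz
          simp only [hW, mem_filter, mem_univ, true_and]
          exact hz.1
  set F : ℕ → Finset (Fin n → Fin q) := fun j =>
    (univ : Finset (Fin n → Fin q)).filter (fun z => qwt z = j) with hF
  have hWsplit : W = (Finset.range (kk+1)).biUnion F := by
    ext z
    simp only [hW, hF, mem_filter, mem_univ, true_and, mem_biUnion, Finset.mem_range]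
    constructor
    · intro h
      exact ⟨qwt z, by omega, rfl⟩
    · rintro ⟨j, hj, h⟩
      omega
  have hFdisj : Set.PairwiseDisjoint (↑(Finset.range (kk+1)) : Set ℕ) F := by
    intro i _ j _ hij
    show Disjoint (F i) (F j)
    rw [Finset.disjoint_left]
    intro z hzi hzj
    simp only [hF, mem_filter] at hzi hzj
    exact hij (hzi.2 ▸ hzj.2)
  have hlevel : ∑ z ∈ W, mu q n t w e z = ∑ j ∈ Finset.range (kk+1), ∑ z ∈ F j, mu q n t w e z := by
    rw [hWsplit, Finset.sum_biUnion hFdisj]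
  set mval : ℕ → ℚ := fun j =>
    if j = kk then 1 else (((w + t).choose kk : ℕ) : ℚ) / (((j + e).choose j : ℕ) : ℚ) with hmval
  have hmvalnn : ∀ j, 0 ≤ mval j := by
    intro j
    rw [hmval]
    dsimp only
    split
    · norm_num
    · positivity
  have hlev : ∀ j ∈ Finset.range (kk+1), ∑ z ∈ F j, mu q n t w e z ≤
      ((n.choose j * (q-1)^j : ℕ) : ℚ) * mval j := by
    intro j _
    have hsum : ∑ z ∈ F j, mu q n t w e z = (F j).card • mval j := by
      rw [Finset.sum_congr rfl (fun z hz => ?_), Finset.sum_const]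
      simp only [hF, mem_filter] at hz
      rw [mu, hz.2, hmval]
    rw [hsum, nsmul_eq_mul]
    refine mul_le_mul_of_nonneg_right ?_ (hmvalnn j)
    have := card_wt_le (n := n) hq j
    have h2 : (F j).card ≤ n.choose j * (q-1)^j := by
      rw [hF]
      exact this
    exact_mod_cast h2
  have hq1 : ((q - 1 : ℕ) : ℚ) = (q : ℚ) - 1 := by
    have h1 : 1 ≤ q := by omega
    push_cast [h1]
    ring
  rw [le_div_iff₀ hCpos]
  calc (b:ℚ) * (((w+t).choose kk : ℕ) : ℚ)
      ≤ ∑ z ∈ W, mu q n t w e z := hglobal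
    _ = ∑ j ∈ Finset.range (kk+1), ∑ z ∈ F j, mu q n t w e z := hlevel
    _ ≤ ∑ j ∈ Finset.range (kk+1), ((n.choose j * (q-1)^j : ℕ) : ℚ) * mval j :=
        Finset.sum_le_sum hlev
    _ = ((n.choose kk * (q-1)^kk : ℕ) : ℚ) * mval kk +
        ∑ j ∈ Finset.range kk, ((n.choose j * (q-1)^j : ℕ) : ℚ) * mval j := by
        rw [Finset.sum_range_succ]
        ring
    _ = ((q : ℚ) - 1) ^ kk * (n.choose kk) +
        (((w + t).choose kk : ℕ) : ℚ) *
          ∑ j ∈ Finset.range kk, ((q : ℚ) - 1) ^ j * (n.choose j) / (((j + e).choose j : ℕ) : ℚ) := by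
        have hterm1 : ((n.choose kk * (q-1)^kk : ℕ) : ℚ) * mval kk
            = ((q : ℚ) - 1) ^ kk * (n.choose kk) := by
          rw [hmval]
          simp only [if_pos rfl]
          push_cast [hq1]
          ring
        rw [hterm1, Finset.mul_sum]
        congr 1
        refine Finset.sum_congr rfl (fun j hj => ?_)
        rw [hmval]
        have hjk : j ≠ kk := by
          rw [Finset.mem_range] at hj
          omega
        simp only [if_neg hjk]
        push_cast [hq1]
        ring
end

section
/- Let t, w, e be positive integers with e ≤ w − 1 and 2·binom(w, w−e) ≥ binom(w−t−1, w−e) + binom(w+t, w−e). Let X be a finite set with |X| = n ≥ t, and let F be a nonempty family of w-subsets of X such that for every subset T ⊆ X with |T| = t there exists B ∈ F with B ∩ T = ∅. Then the number of (w−e)-subsets of X that are contained in at least one member of F is at least binom(w+t, w−e). -/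
open Finset

private lemma choose_add_mul_le (w k' : ℕ) :
    ∀ m : ℕ, w.choose (k' + 1) + m * w.choose k' ≤ (w + m).choose (k' + 1) := by
  intro m
  induction m with
  | zero => simp
  | succ m ih =>
    have h1 : w.choose k' ≤ (w + m).choose k' :=
      Nat.choose_le_choose _ (by omega)
    have h2 : (w + (m + 1)).choose (k' + 1)
        = (w + m).choose k' + (w + m).choose (k' + 1) := by
      rw [show w + (m + 1) = (w + m) + 1 by ring, Nat.choose_succ_succ]
    have h3 : (m + 1) * w.choose k' = m * w.choose k' + w.choose k' := by ring
    omega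

private lemma arith_AL (w t k : ℕ) (ht : 1 ≤ t) (hk2 : 2 ≤ k) (hkw : k ≤ w)
    (hc : (w + t).choose k ≤ 2 * w.choose k) : k + 2 * t ≤ w + 2 := by
  by_contra hno
  push_neg at hno
  obtain ⟨k', rfl⟩ : ∃ k', k = k' + 1 := ⟨k - 1, by omega⟩
  have h1 : w.choose (k' + 1) + t * w.choose k' ≤ (w + t).choose (k' + 1) :=
    choose_add_mul_le w k' t
  have h2 := Nat.choose_succ_right_eq w k'
  have h3 : 0 < w.choose k' := Nat.choose_pos (by omega)
  have h5 : t * 2 ≤ t * (k' + 1) := Nat.mul_le_mul_left t (by omega)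
  have h45 : w - k' < t * (k' + 1) := by omega
  have h4 : w.choose k' * (w - k') < w.choose k' * (t * (k' + 1)) :=
    (Nat.mul_lt_mul_left h3).mpr h45
  have h6 : w.choose (k' + 1) * (k' + 1) < (t * w.choose k') * (k' + 1) := by
    calc w.choose (k' + 1) * (k' + 1) = w.choose k' * (w - k') := h2
      _ < w.choose k' * (t * (k' + 1)) := h4
      _ = (t * w.choose k') * (k' + 1) := by ring
  have h7 : w.choose (k' + 1) < t * w.choose k' := Nat.lt_of_mul_lt_mul_right h6
  omega

theorem covered_subsets_lower_bound {α : Type*} [DecidableEq α]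
    (t w e n : ℕ) (ht : 1 ≤ t) (hw : 1 ≤ w) (he : 1 ≤ e) (hew : e + 1 ≤ w)
    (hcond : (w - t - 1).choose (w - e) + (w + t).choose (w - e) ≤
      2 * w.choose (w - e))
    (X : Finset α) (hX : X.card = n) (hn : t ≤ n)
    (F : Finset (Finset α)) (hF : F.Nonempty)
    (hsub : ∀ B ∈ F, B ⊆ X) (hcard : ∀ B ∈ F, B.card = w)
    (hA : ∀ T ⊆ X, T.card = t → ∃ B ∈ F, Disjoint B T) :
    (w + t).choose (w - e) ≤
      ((X.powersetCard (w - e)).filter (fun s => ∃ B ∈ F, s ⊆ B)).card := by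
  classical
  set k := w - e with hkdef
  have hk1 : 1 ≤ k := by omega
  have hkw : k ≤ w - 1 := by omega
  obtain ⟨B₀, hB₀⟩ := hF
  by_cases hcase : ∃ B ∈ F, ∃ B' ∈ F, B ≠ B' ∧ (B ∩ B').card + t + 1 ≤ w
  · -- two members with small intersection
    obtain ⟨B, hB, B', hB', hne, hint⟩ := hcase
    have hsubcov : B.powersetCard k ∪ B'.powersetCard k ⊆
        (X.powersetCard k).filter (fun s => ∃ B ∈ F, s ⊆ B) := by
      intro s hs
      rw [Finset.mem_union, Finset.mem_powersetCard, Finset.mem_powersetCard] at hs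
      rw [Finset.mem_filter, Finset.mem_powersetCard]
      rcases hs with ⟨h1, h2⟩ | ⟨h1, h2⟩
      · exact ⟨⟨h1.trans (hsub B hB), h2⟩, B, hB, h1⟩
      · exact ⟨⟨h1.trans (hsub B' hB'), h2⟩, B', hB', h1⟩
    have hPB : (B.powersetCard k).card = w.choose k := by
      rw [Finset.card_powersetCard, hcard B hB]
    have hPB' : (B'.powersetCard k).card = w.choose k := by
      rw [Finset.card_powersetCard, hcard B' hB']
    have hIsub : B.powersetCard k ∩ B'.powersetCard k ⊆ (B ∩ B').powersetCard k := by
      intro s hs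
      rw [Finset.mem_inter, Finset.mem_powersetCard, Finset.mem_powersetCard] at hs
      rw [Finset.mem_powersetCard]
      exact ⟨Finset.subset_inter hs.1.1 hs.2.1, hs.1.2⟩
    have hIcard : (B.powersetCard k ∩ B'.powersetCard k).card ≤ (w - t - 1).choose k := by
      refine le_trans (Finset.card_le_card hIsub) ?_
      rw [Finset.card_powersetCard]
      exact Nat.choose_le_choose _ (by omega)
    have hUI := Finset.card_union_add_card_inter (B.powersetCard k) (B'.powersetCard k)
    have hle := Finset.card_le_card hsubcov
    omega
  · push_neg at hcase
    have hpair : ∀ B ∈ F, ∀ B' ∈ F, B ≠ B' → w ≤ (B ∩ B').card + t := by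
      intro B hB B' hB' hne
      have := hcase B hB B' hB' hne
      omega
    set U := F.sup id with hU
    have hBU : ∀ B ∈ F, B ⊆ U := fun B hB => Finset.le_sup (f := id) hB
    have hUX : U ⊆ X := Finset.sup_le (fun B hB => hsub B hB)
    -- |U| ≥ w + t
    have hUcard : w + t ≤ U.card := by
      rcases le_total t U.card with h | h
      · obtain ⟨T, hTU, hTcard⟩ := Finset.exists_subset_card_eq h
        obtain ⟨B, hBF, hBdisj⟩ := hA T (hTU.trans hUX) hTcard
        have hcu : (B ∪ T).card = w + t := by
          rw [Finset.card_union_of_disjoint hBdisj, hcard B hBF, hTcard]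
        have hcle := Finset.card_le_card (Finset.union_subset (hBU B hBF) hTU)
        omega
      · obtain ⟨T, hUT, hTX, hTcard⟩ :=
          Finset.exists_subsuperset_card_eq hUX h (by omega)
        obtain ⟨B, hBF, hBdisj⟩ := hA T hTX hTcard
        have hBT : B ⊆ T := (hBU B hBF).trans hUT
        have hBempty : B = ∅ := Finset.subset_empty.mp (hBdisj le_rfl hBT)
        have := hcard B hBF
        rw [hBempty] at this
        simp at this
        omega
    -- arithmetic: hcond forces k + 2t ≤ w + 2 when k ≥ 2
    have hAL : 2 ≤ k → k + 2 * t ≤ w + 2 := fun hk2 =>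
      arith_AL w t k ht hk2 (by omega) (by omega)
    -- every k-subset of U is covered
    have lemA : ∀ j, (2 ≤ j → j + 2 * t ≤ w + 2) →
        ∀ S, S ⊆ U → S.card = j → ∃ B ∈ F, S ⊆ B := by
      intro j
      induction j with
      | zero =>
        intro _ S hSU hS
        exact ⟨B₀, hB₀, by simp [Finset.card_eq_zero.mp hS]⟩
      | succ j ih =>
        intro hcond2 S hSU hScard
        rcases Nat.eq_zero_or_pos j with hj0 | hjpos
        · subst hj0
          obtain ⟨x, rfl⟩ := Finset.card_eq_one.mp hScard
          have hx : x ∈ U := hSU (Finset.mem_singleton_self x)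
          rw [hU, Finset.mem_sup] at hx
          obtain ⟨B, hBF, hxB⟩ := hx
          exact ⟨B, hBF, Finset.singleton_subset_iff.mpr hxB⟩
        · have hw2 : (j + 1) + 2 * t ≤ w + 2 := hcond2 (by omega)
          obtain ⟨y, hy, z, hz, hyz⟩ := Finset.one_lt_card.mp
            (by omega : 1 < S.card)
          obtain ⟨C, hC, hCsub⟩ := ih (fun h => by omega) (S.erase y)
            ((Finset.erase_subset _ _).trans hSU)
            (by rw [Finset.card_erase_of_mem hy, hScard]; omega)
          by_cases hyC : y ∈ C
          · refine ⟨C, hC, fun x hx => ?_⟩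
            rcases eq_or_ne x y with rfl | hxy
            · exact hyC
            · exact hCsub (Finset.mem_erase.mpr ⟨hxy, hx⟩)
          obtain ⟨C', hC', hC'sub⟩ := ih (fun h => by omega) (S.erase z)
            ((Finset.erase_subset _ _).trans hSU)
            (by rw [Finset.card_erase_of_mem hz, hScard]; omega)
          by_cases hzC' : z ∈ C'
          · refine ⟨C', hC', fun x hx => ?_⟩
            rcases eq_or_ne x z with rfl | hxz
            · exact hzC'
            · exact hC'sub (Finset.mem_erase.mpr ⟨hxz, hx⟩)
          have hzC : z ∈ C := hCsub (Finset.mem_erase.mpr ⟨hyz.symm, hz⟩)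
          have hCne : C ≠ C' := fun h => hzC' (h ▸ hzC)
          have hpairCC' := hpair C hC C' hC' hCne
          have hsub2 : (C ∩ C') ∩ S ⊆ (S.erase y).erase z := by
            intro x hx
            rw [Finset.mem_inter, Finset.mem_inter] at hx
            rw [Finset.mem_erase, Finset.mem_erase]
            exact ⟨fun h => hzC' (h ▸ hx.1.2), fun h => hyC (h ▸ hx.1.1), hx.2⟩
          have hc1 : ((C ∩ C') ∩ S).card ≤ j - 1 := by
            refine le_trans (Finset.card_le_card hsub2) ?_
            rw [Finset.card_erase_of_mem
              (Finset.mem_erase.mpr ⟨hyz.symm, hz⟩),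
              Finset.card_erase_of_mem hy, hScard]
            omega
          have hc2 := Finset.card_sdiff_add_card_inter (C ∩ C') S
          have ht_le : t ≤ ((C ∩ C') \ S).card := by omega
          obtain ⟨T, hTsub, hTcard⟩ := Finset.exists_subset_card_eq ht_le
          have hTCC' : T ⊆ C ∩ C' := hTsub.trans Finset.sdiff_subset
          have hTC : T ⊆ C := hTCC'.trans Finset.inter_subset_left
          have hTC' : T ⊆ C' := hTCC'.trans Finset.inter_subset_right
          have hTX : T ⊆ X := hTC.trans (hsub C hC)
          obtain ⟨D, hD, hDdisj⟩ := hA T hTX hTcard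
          have hTS : ∀ x ∈ T, x ∉ S := fun x hx =>
            (Finset.mem_sdiff.mp (hTsub hx)).2
          have hTne : T.Nonempty := by
            rw [← Finset.card_pos, hTcard]; omega
          obtain ⟨x₀, hx₀⟩ := hTne
          have hx₀D : x₀ ∉ D := Finset.disjoint_right.mp hDdisj hx₀
          have hDC : D ≠ C := fun h => hx₀D (h ▸ hTC hx₀)
          have hDC' : D ≠ C' := fun h => hx₀D (h ▸ hTC' hx₀)
          have hforce : ∀ E, E ∈ F → T ⊆ E → D ≠ E → E \ T ⊆ D := by
            intro E hE hTE hDE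
            have h1 : D ∩ E ⊆ E \ T := by
              intro x hx
              rw [Finset.mem_inter] at hx
              rw [Finset.mem_sdiff]
              exact ⟨hx.2, fun hxT => (Finset.disjoint_right.mp hDdisj hxT) hx.1⟩
            have h2 : (E \ T).card = w - t := by
              rw [Finset.card_sdiff_of_subset hTE, hcard E hE, hTcard]
            have h3 : w ≤ (D ∩ E).card + t := hpair D hD E hE hDE
            have h4 : D ∩ E = E \ T :=
              Finset.eq_of_subset_of_card_le h1 (by omega)
            rw [← h4]
            exact Finset.inter_subset_left
          have h4 : C \ T ⊆ D := hforce C hC hTC hDC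
          have h5 : C' \ T ⊆ D := hforce C' hC' hTC' hDC'
          refine ⟨D, hD, fun x hx => ?_⟩
          have hxT : x ∉ T := fun h => hTS x h hx
          rcases eq_or_ne x y with rfl | hxy
          · exact h5 (Finset.mem_sdiff.mpr
              ⟨hC'sub (Finset.mem_erase.mpr ⟨hyz, hx⟩), hxT⟩)
          · exact h4 (Finset.mem_sdiff.mpr
              ⟨hCsub (Finset.mem_erase.mpr ⟨hxy, hx⟩), hxT⟩)
    have hALk : 2 ≤ k → k + 2 * t ≤ w + 2 := hAL
    have hsubcov : U.powersetCard k ⊆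
        (X.powersetCard k).filter (fun s => ∃ B ∈ F, s ⊆ B) := by
      intro s hs
      rw [Finset.mem_powersetCard] at hs
      rw [Finset.mem_filter, Finset.mem_powersetCard]
      exact ⟨⟨hs.1.trans hUX, hs.2⟩, lemA k hALk s hs.1 hs.2⟩
    calc (w + t).choose k ≤ U.card.choose k := Nat.choose_le_choose k hUcard
      _ = (U.powersetCard k).card := (Finset.card_powersetCard k U).symm
      _ ≤ _ := Finset.card_le_card hsubcov
end

section
/- Let q ≥ 2 and let t, w, e be positive integers. If there exists an (n, 2(e+t)+1, w+t)_q constant-weight code of size M, then there exists a q-ary (n, t, w, e)-LPECC code of size M in which every codeword has weight exactly w (i.e., a q-ary (n, t, w, e)-CPECC code of size M). In particular, C_q(n,t,w,e) ≥ A_q(n, 2(e+t)+1, w+t). -/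
open Finset

/-- An `(n,d,w)_q` constant-weight code: all codewords have weight exactly `w`
and distinct codewords have Hamming distance at least `d`. -/
def IsCWC (q n d w : ℕ) (C : Finset (Fin n → Fin q)) : Prop :=
  (∀ x ∈ C, qwt x = w) ∧
  (∀ x ∈ C, ∀ y ∈ C, x ≠ y → d ≤ hammingDist x y)

/-- `Cq q n t w e` is the maximum size of a `q`-ary `(n,t,w,e)`-LPECC code. -/
noncomputable def Cq (q n t w e : ℕ) : ℕ :=
  sSup {b : ℕ | ∃ P : Fin b → Finset (Fin n → Fin q), IsQaryLPECC q n t w e P}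

/-- `Aq q n d w` is the maximum size of an `(n,d,w)_q` constant-weight code. -/
noncomputable def Aq (q n d w : ℕ) : ℕ :=
  sSup {M : ℕ | ∃ C : Finset (Fin n → Fin q), IsCWC q n d w C ∧ C.card = M}

def zout {n q : ℕ} [NeZero q] (c : Fin n → Fin q) (S : Finset (Fin n)) : Fin n → Fin q :=
  fun i => if i ∈ S then 0 else c i

lemma qsupp_zout {n q : ℕ} [NeZero q] (c : Fin n → Fin q) (S : Finset (Fin n)) :
    qsupp (zout c S) = qsupp c \ S := by
  ext i
  simp only [qsupp, zout, mem_filter, mem_univ, true_and, mem_sdiff]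
  by_cases h : i ∈ S <;> simp [h]

lemma hdist_zout {n q : ℕ} [NeZero q] (c : Fin n → Fin q) (S : Finset (Fin n))
    (hS : S ⊆ qsupp c) : hammingDist (zout c S) c = S.card := by
  unfold hammingDist
  congr 1
  ext i
  simp only [mem_filter, mem_univ, true_and, zout]
  by_cases h : i ∈ S
  · have : (c i : ℕ) ≠ 0 := by
      have := hS h; simpa [qsupp] using this
    simp only [h, if_true, iff_true]
    exact Finset.mem_filter.2 ⟨Finset.mem_univ _, fun h0 => this (by rw [if_pos h] at h0; rw [← h0]; simp)⟩
  · simp [h]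

lemma exists_lpecc (q n t w e : ℕ) (hq : 2 ≤ q)
    (C : Finset (Fin n → Fin q)) (hC : IsCWC q n (2 * (e + t) + 1) (w + t) C) :
    ∃ P : Fin C.card → Finset (Fin n → Fin q),
      IsQaryLPECC q n t w e P ∧ ∀ i, ∀ x ∈ P i, qwt x = w := by
  haveI : NeZero q := ⟨by omega⟩
  obtain ⟨hCw, hCd⟩ := hC
  set E : Fin C.card ≃ C := C.equivFin.symm with hE
  set P : Fin C.card → Finset (Fin n → Fin q) := fun i =>
    ((qsupp (E i : Fin n → Fin q)).powersetCard t).image (zout (E i : Fin n → Fin q))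
    with hP
  have hmem : ∀ i x, x ∈ P i ↔
      ∃ S, S ⊆ qsupp (E i : Fin n → Fin q) ∧ S.card = t ∧ x = zout (E i : Fin n → Fin q) S := by
    intro i x
    simp only [hP, mem_image, mem_powersetCard]
    constructor
    · rintro ⟨S, ⟨h1, h2⟩, h3⟩; exact ⟨S, h1, h2, h3.symm⟩
    · rintro ⟨S, h1, h2, h3⟩; exact ⟨S, ⟨h1, h2⟩, h3.symm⟩
  have hcwt : ∀ i : Fin C.card, qwt (E i : Fin n → Fin q) = w + t :=
    fun i => hCw _ (E i).2
  have hdc : ∀ i x, x ∈ P i → hammingDist x (E i : Fin n → Fin q) = t := by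
    intro i x hx
    obtain ⟨S, h1, h2, h3⟩ := (hmem i x).1 hx
    rw [h3, hdist_zout _ _ h1, h2]
  have hxwt : ∀ i, ∀ x ∈ P i, qwt x = w := by
    intro i x hx
    obtain ⟨S, h1, h2, h3⟩ := (hmem i x).1 hx
    rw [h3]
    unfold qwt
    rw [qsupp_zout, card_sdiff_of_subset h1, h2]
    have := hcwt i
    unfold qwt at this
    omega
  have hnei : ∀ i j : Fin C.card, i ≠ j →
      (E i : Fin n → Fin q) ≠ (E j : Fin n → Fin q) := by
    intro i j hij hcc
    exact hij (E.injective (Subtype.ext hcc))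
  have hdxy : ∀ i j : Fin C.card, i ≠ j → ∀ x ∈ P i, ∀ y ∈ P j,
      2 * e + 1 ≤ hammingDist x y := by
    intro i j hij x hx y hy
    have hcc := hCd _ (E i).2 _ (E j).2 (hnei i j hij)
    have t1 := hammingDist_triangle (E i : Fin n → Fin q) x (E j : Fin n → Fin q)
    have t2 := hammingDist_triangle x y (E j : Fin n → Fin q)
    have d1 : hammingDist (E i : Fin n → Fin q) x = t := by
      rw [hammingDist_comm]; exact hdc i x hx
    have d2 : hammingDist y (E j : Fin n → Fin q) = t := hdc j y hy
    omega
  refine ⟨P, ⟨?_, ?_, ?_, ?_, hdxy⟩, hxwt⟩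
  · -- nonempty
    intro i
    apply Finset.Nonempty.image
    rw [powersetCard_nonempty]
    rw [show (qsupp (E i : Fin n → Fin q)).card = w + t from hcwt i]
    omega
  · -- disjoint
    intro i j hij
    rw [Finset.disjoint_left]
    intro x hxi hxj
    have := hdxy i j hij x hxi x hxj
    simp at this
  · -- property A
    intro T hT i
    set c : Fin n → Fin q := (E i : Fin n → Fin q)
    have hsub : qsupp c ∩ T ⊆ qsupp c := inter_subset_left
    have hcard1 : (qsupp c ∩ T).card ≤ t := le_trans (card_le_card inter_subset_right) hT.le
    have hcard2 : t ≤ (qsupp c).card := by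
      have h := hcwt i; unfold qwt at h
      show t ≤ (qsupp ((E i : Fin n → Fin q))).card
      omega
    obtain ⟨S, hS1, hS2, hS3⟩ := exists_subsuperset_card_eq hsub hcard1 hcard2
    refine ⟨zout c S, (hmem i _).2 ⟨S, hS2, hS3, rfl⟩, ?_⟩
    rw [qsupp_zout, Finset.disjoint_left]
    intro a ha haT
    rw [mem_sdiff] at ha
    exact ha.2 (hS1 (mem_inter.2 ⟨ha.1, haT⟩))
  · intro i x hx; exact (hxwt i x hx).le

lemma lpecc_bdd (q n t w e : ℕ) :
    BddAbove {b : ℕ | ∃ P : Fin b → Finset (Fin n → Fin q), IsQaryLPECC q n t w e P} := by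
  refine ⟨q ^ n, ?_⟩
  rintro b ⟨P, h1, h2, -⟩
  choose f hf using h1
  have hinj : Function.Injective f := by
    intro i j hij
    by_contra hne
    exact (Finset.disjoint_left.mp (h2 i j hne) (hf i)) (hij ▸ hf j)
  calc b = Fintype.card (Fin b) := (Fintype.card_fin b).symm
    _ ≤ Fintype.card (Fin n → Fin q) := Fintype.card_le_of_injective f hinj
    _ = q ^ n := by simp

theorem cpecc_from_cwc (q n t w e M : ℕ) (hq : 2 ≤ q) (ht : 1 ≤ t)
    (hw : 1 ≤ w) (he : 1 ≤ e)
    (C : Finset (Fin n → Fin q)) (hC : IsCWC q n (2 * (e + t) + 1) (w + t) C)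
    (hM : C.card = M) :
    (∃ P : Fin M → Finset (Fin n → Fin q),
      IsQaryLPECC q n t w e P ∧ ∀ i, ∀ x ∈ P i, qwt x = w) ∧
    Aq q n (2 * (e + t) + 1) (w + t) ≤ Cq q n t w e := by
  constructor
  · subst hM
    exact exists_lpecc q n t w e hq C hC
  · refine csSup_le ⟨M, ?_⟩ ?_
    · exact ⟨C, hC, hM⟩
    rintro M' ⟨C', hC', hM'⟩
    obtain ⟨P, hP, -⟩ := exists_lpecc q n t w e hq C' hC'
    have hmem : M' ∈ {b : ℕ | ∃ P : Fin b → Finset (Fin n → Fin q), IsQaryLPECC q n t w e P} := by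
      subst hM'; exact ⟨P, hP⟩
    exact le_csSup (lpecc_bdd q n t w e) hmem
end

section
/- Let q ≥ 2 and let t, w, e be positive integers with e ≤ w − 1, 2·binom(w, w−e) ≥ binom(w−t−1, w−e) + binom(w+t, w−e), and n ≥ t. Then every q-ary (n, t, w, e)-CPECC code of size b satisfies b · binom(w+t, w−e) ≤ (q−1)^{w−e} · binom(n, w−e). -/
set_option maxHeartbeats 1000000

open Finset

private lemma choose_two (n : ℕ) : 2 * (n+1).choose 2 = (n+1) * n := by
  induction n with
  | zero => rfl
  | succ m ih =>
    rw [show m + 1 + 1 = (m+1) + 1 from rfl, Nat.choose_succ_succ,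
      Nat.mul_add, ih, Nat.choose_one_right]
    ring

private lemma choose_three (n : ℕ) : 6 * (n+2).choose 3 = (n+2) * (n+1) * n := by
  induction n with
  | zero => rfl
  | succ m ih =>
    rw [show m + 1 + 2 = (m+2) + 1 from rfl, Nat.choose_succ_succ,
      Nat.mul_add, ih, show (6 : ℕ) = 3 * 2 from rfl, Nat.mul_assoc,
      choose_two (m+1)]
    ring

private lemma ratio2 (w m : ℕ) (h3 : 3*w ≤ 2*m) :
    ∀ k, 2 ≤ k → k < w → 2 * w.choose k < m.choose k := by
  intro k hk2
  induction k, hk2 using Nat.le_induction with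
  | base =>
    intro hkw
    obtain ⟨a, rfl⟩ : ∃ a, w = a + 3 := ⟨w - 3, by omega⟩
    obtain ⟨c, rfl⟩ : ∃ c, m = c + 5 := ⟨m - 5, by omega⟩
    have e1 := choose_two (a+2)
    have e2 := choose_two (c+4)
    nlinarith [e1, e2, h3]
  | succ k hk2 ih =>
    intro hkw
    have hlt := ih (by omega)
    have h1 := Nat.choose_succ_right_eq w k
    have h2 := Nat.choose_succ_right_eq m k
    have hwm : w ≤ m := by omega
    have key : (2 * w.choose (k+1)) * (k+1) < m.choose (k+1) * (k+1) := by
      calc (2 * w.choose (k+1)) * (k+1) = 2 * (w.choose (k+1) * (k+1)) := by ring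
        _ = (2 * w.choose k) * (w - k) := by rw [h1]; ring
        _ < m.choose k * (w - k) := by
            exact mul_lt_mul_of_pos_right hlt (by omega)
        _ ≤ m.choose k * (m - k) := Nat.mul_le_mul_left _ (by omega)
        _ = m.choose (k+1) * (k+1) := h2.symm
    exact lt_of_mul_lt_mul_right key (Nat.zero_le _)

private lemma A_bound (w k : ℕ) : ∀ c, w.choose (k+1) + c * w.choose k ≤ (w+c).choose (k+1) := by
  intro c
  induction c with
  | zero => simp
  | succ c ih =>
    have h1 : (w + (c+1)).choose (k+1) = (w+c).choose k + (w+c).choose (k+1) := by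
      rw [show w + (c+1) = (w + c) + 1 from rfl, Nat.choose_succ_succ]
    have h2 : w.choose k ≤ (w+c).choose k := Nat.choose_le_choose k (by omega)
    have h3 := ih
    have h4 : (c+1) * w.choose k = c * w.choose k + w.choose k := by ring
    omega

private lemma B_bound (s d k : ℕ) : ∀ r, r ≤ d + 1 → (s + r).choose (k+1) ≤ s.choose (k+1) + r * (s + d).choose k := by
  intro r
  induction r with
  | zero => simp
  | succ r ih =>
    intro hr
    have h1 : (s + (r+1)).choose (k+1) = (s+r).choose k + (s+r).choose (k+1) := by
      rw [show s + (r+1) = (s + r) + 1 from rfl, Nat.choose_succ_succ]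
    have h2 : (s+r).choose k ≤ (s+d).choose k := Nat.choose_le_choose k (by omega)
    have h3 := ih (by omega)
    have h4 : (r+1) * (s + d).choose k = r * (s + d).choose k + (s + d).choose k := by ring
    omega

private lemma three_t_le_w {t w k : ℕ} (ht : 1 ≤ t) (hk2 : 2 ≤ k) (hkw : k < w)
    (hcond : (w - t - 1).choose k + (w + t).choose k ≤ 2 * w.choose k) : 3 * t ≤ w := by
  by_contra hlt
  push_neg at hlt
  by_cases hw2 : w ≤ 2*t
  · have h := ratio2 w (w+t) (by omega) k hk2 hkw
    have := Nat.zero_le ((w - t - 1).choose k)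
    omega
  · -- 2t+1 ≤ w ≤ 3t-1, so t ≥ 2 and s := w-t-1 ∈ [t, 2t-2]
    have ht2 : 2 ≤ t := by omega
    obtain ⟨s, rfl⟩ : ∃ s, w = s + t + 1 := ⟨w - t - 1, by omega⟩
    have hst : t ≤ s := by omega
    have hs2t : s ≤ 2*t - 2 := by omega
    have harg : s + t + 1 - t - 1 = s := by omega
    rw [harg] at hcond
    rcases Nat.lt_or_ge k 4 with hk4 | hk4
    · interval_cases k
      · -- k = 2
        obtain ⟨σ, rfl⟩ : ∃ σ, s = σ + 2 := ⟨s - 2, by omega⟩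
        have e1 := choose_two (σ+1)
        have e2 : 2 * (σ + 2 + t + 1 + t).choose 2 = (σ + 2*t + 3) * (σ + 2*t + 2) := by
          rw [show σ + 2 + t + 1 + t = (σ + 2*t + 2) + 1 by ring]
          exact choose_two (σ + 2*t + 2)
        have e3 : 2 * (σ + 2 + t + 1).choose 2 = (σ + t + 3) * (σ + t + 2) := by
          rw [show σ + 2 + t + 1 = (σ + t + 2) + 1 by ring]
          exact choose_two (σ + t + 2)
        have hc2 : 2 * ((σ+2).choose 2) + 2 * ((σ + 2 + t + 1 + t).choose 2) ≤
            2 * (2 * ((σ + 2 + t + 1).choose 2)) := by omega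
        rw [e2, e3] at hc2
        rw [show σ + 2 = σ + 1 + 1 by ring, e1] at hc2
        have h4 : σ + 4 ≤ 2*t := by omega
        zify at hc2 h4
        have ht2Z : (2:ℤ) ≤ (t:ℤ) := by exact_mod_cast ht2
        have hσZ : (0:ℤ) ≤ (σ:ℤ) := Int.natCast_nonneg σ
        nlinarith [hc2, h4, ht2Z, hσZ, sq_nonneg ((t:ℤ)-1)]
      · -- k = 3
        obtain ⟨σ, rfl⟩ : ∃ σ, s = σ + 2 := ⟨s - 2, by omega⟩
        have e1 := choose_three σ
        have e2 : 6 * (σ + 2 + t + 1 + t).choose 3 = (σ + 2*t + 3) * (σ + 2*t + 2) * (σ + 2*t + 1) := by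
          rw [show σ + 2 + t + 1 + t = (σ + 2*t + 1) + 2 by ring]
          exact choose_three (σ + 2*t + 1)
        have e3 : 6 * (σ + 2 + t + 1).choose 3 = (σ + t + 3) * (σ + t + 2) * (σ + t + 1) := by
          rw [show σ + 2 + t + 1 = (σ + t + 1) + 2 by ring]
          exact choose_three (σ + t + 1)
        have hc3 : 6 * ((σ+2).choose 3) + 6 * ((σ + 2 + t + 1 + t).choose 3) ≤
            2 * (6 * ((σ + 2 + t + 1).choose 3)) := by omega
        rw [e1, e2, e3] at hc3
        have h4 : σ + 4 ≤ 2*t := by omega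
        zify at hc3 h4
        have ht2Z : (2:ℤ) ≤ (t:ℤ) := by exact_mod_cast ht2
        have hσZ : (0:ℤ) ≤ (σ:ℤ) := Int.natCast_nonneg σ
        have htZ : (0:ℤ) ≤ (t:ℤ) := by linarith
        have key : ((σ:ℤ)+1)*((σ:ℤ)+2) < 2*(t:ℤ)^3 + 4*(t:ℤ)^2 + 2*(σ:ℤ)*(t:ℤ)^2 := by
          have h1 : ((σ:ℤ)+1)*((σ:ℤ)+2) ≤ (2*(t:ℤ)-3)*(2*(t:ℤ)-2) :=
            mul_le_mul (by linarith) (by linarith) (by linarith) (by linarith)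
          nlinarith [h1, ht2Z, hσZ, mul_nonneg (mul_nonneg hσZ htZ) htZ,
            mul_nonneg (mul_nonneg (by linarith : (0:ℤ) ≤ (t:ℤ)-2) htZ) htZ,
            mul_nonneg (by linarith : (0:ℤ) ≤ (t:ℤ)-2) htZ]
        nlinarith [hc3, key]
    · -- k ≥ 4
      obtain ⟨μ, rfl⟩ : ∃ μ, k = μ + 2 := ⟨k - 2, by omega⟩
      have hμ : 2 ≤ μ := by omega
      have hA := A_bound (s+t+1) (μ+1) t
      have hB := B_bound s t (μ+1) (t+1) (le_refl _)
      rw [show s + (t+1) = s + t + 1 by ring] at hB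
      have hmain : t * (s+t+1).choose (μ+1) ≤ (t+1) * (s+t).choose (μ+1) := by
        linarith [hcond, hA, hB]
      rw [show s+t+1 = (s+t)+1 from rfl, Nat.choose_succ_succ] at hmain
      have h5 : t * (s+t).choose μ ≤ (s+t).choose (μ+1) := by nlinarith [hmain]
      have hsr := Nat.choose_succ_right_eq (s+t) μ
      have hpos : 0 < (s+t).choose μ := Nat.choose_pos (by omega)
      have h6 : (t*(μ+1)) * (s+t).choose μ ≤ (s+t-μ) * (s+t).choose μ := by
        calc (t*(μ+1)) * (s+t).choose μ = (μ+1) * (t * (s+t).choose μ) := by ring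
          _ ≤ (μ+1) * (s+t).choose (μ+1) := Nat.mul_le_mul_left _ h5
          _ = (s+t-μ) * (s+t).choose μ := by rw [mul_comm ((μ:ℕ)+1), hsr, mul_comm]
      have h7 : t*(μ+1) ≤ s+t-μ := Nat.le_of_mul_le_mul_right h6 hpos
      have h8 : 3*t ≤ t*(μ+1) := by
        calc 3*t = t*3 := by ring
          _ ≤ t*(μ+1) := Nat.mul_le_mul_left _ (by omega)
      omega

lemma mem_qsupp {n q : ℕ} {x : Fin n → Fin q} {j : Fin n} :
    j ∈ qsupp x ↔ (x j : ℕ) ≠ 0 := by simp [qsupp]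

lemma total_count {n q : ℕ} (k : ℕ) (hq : 2 ≤ q) :
    (univ.filter fun z : Fin n → Fin q => qwt z = k).card ≤ (q-1)^k * n.choose k := by
  classical
  haveI : NeZero q := ⟨by omega⟩
  have hsub : (univ.filter fun z : Fin n → Fin q => qwt z = k) ⊆
      ((univ : Finset (Fin n)).powersetCard k).biUnion
        (fun K => univ.filter fun z : Fin n → Fin q => qsupp z = K) := by
    intro z hz
    simp only [mem_filter, mem_univ, true_and] at hz
    exact mem_biUnion.2 ⟨qsupp z, mem_powersetCard.2 ⟨subset_univ _, hz⟩,
      mem_filter.2 ⟨mem_univ _, rfl⟩⟩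
  refine le_trans (card_le_card hsub) (le_trans card_biUnion_le ?_)
  have hfib : ∀ K ∈ (univ : Finset (Fin n)).powersetCard k,
      (univ.filter fun z : Fin n → Fin q => qsupp z = K).card ≤ (q-1)^k := by
    intro K hK
    obtain ⟨-, hKc⟩ := mem_powersetCard.1 hK
    have hinj : (univ.filter fun z : Fin n → Fin q => qsupp z = K).card ≤
        ((univ : Finset (Fin n)).pi (fun j => if j ∈ K then (univ.filter fun v : Fin q => v ≠ 0) else {0})).card := by
      apply card_le_card_of_injOn (fun z => fun j _ => z j)
      · intro z hz
        simp only [mem_coe, mem_filter, mem_univ, true_and] at hz ⊢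
        rw [mem_pi]
        intro j _
        by_cases hj : j ∈ K
        · simp only [hj, if_pos, mem_filter, mem_univ, true_and]
          have : j ∈ qsupp z := hz ▸ hj
          rw [mem_qsupp] at this
          exact fun h0 => this (by rw [h0]; rfl)
        · simp only [hj, if_neg, not_false_iff, mem_singleton]
          have : j ∉ qsupp z := fun h => hj (hz ▸ h)
          rw [mem_qsupp, not_not] at this
          exact Fin.ext (by simpa using this)
      · intro z1 _ z2 _ he
        funext j
        exact congrFun (congrFun he j) (mem_univ j)
    rw [card_pi] at hinj
    have hprod : (∏ j : Fin n, (if j ∈ K then (univ.filter fun v : Fin q => v ≠ 0) else ({0} : Finset (Fin q))).card)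
        = (q-1)^k := by
      have hcards : ∀ j : Fin n,
          (if j ∈ K then (univ.filter fun v : Fin q => v ≠ 0) else ({0} : Finset (Fin q))).card
          = if j ∈ K then q-1 else 1 := by
        intro j
        by_cases hj : j ∈ K
        · simp only [hj, if_pos]
          have : (univ.filter fun v : Fin q => v ≠ 0) = univ.erase 0 := by
            ext v; simp [Ne, eq_comm]
          rw [this, card_erase_of_mem (mem_univ _), card_univ, Fintype.card_fin]
        · simp [hj]
      rw [Finset.prod_congr rfl (fun j _ => hcards j), Finset.prod_ite_mem,
        univ_inter, Finset.prod_const, hKc]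
    rw [hprod] at hinj
    exact hinj
  calc ∑ K ∈ (univ : Finset (Fin n)).powersetCard k,
        (univ.filter fun z : Fin n → Fin q => qsupp z = K).card
      ≤ ∑ _K ∈ (univ : Finset (Fin n)).powersetCard k, (q-1)^k := Finset.sum_le_sum hfib
    _ = (q-1)^k * n.choose k := by
        rw [Finset.sum_const, card_powersetCard, card_univ, Fintype.card_fin, smul_eq_mul, mul_comm]

lemma class_shadow_bound {n q : ℕ} {t w e k : ℕ}
    (ht : 1 ≤ t) (he : 1 ≤ e) (hk1 : 1 ≤ k) (hke : k + e = w) (hn : t ≤ n)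
    (hcond : (w - t - 1).choose k + (w + t).choose k ≤ 2 * w.choose k)
    (Q : Finset (Fin n → Fin q))
    (hA : ∀ T : Finset (Fin n), T.card = t → ∃ x ∈ Q, Disjoint (qsupp x) T)
    (hw : ∀ x ∈ Q, (qsupp x).card = w) :
    (w + t).choose k ≤ (Q.biUnion (fun x => (qsupp x).powersetCard k)).card := by
  classical
  set D := Q.biUnion (fun x => (qsupp x).powersetCard k) with hD
  -- a t-set exists
  obtain ⟨T₁, -, hT₁c⟩ := Finset.exists_subset_card_eq (s := (univ : Finset (Fin n))) (n := t)
    (by rw [card_univ, Fintype.card_fin]; exact hn)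
  obtain ⟨x0, hx0, -⟩ := hA T₁ hT₁c
  rcases Nat.lt_or_ge k 2 with hk2 | hk2
  · -- k = 1
    have hk : k = 1 := by omega
    subst hk
    set U := Q.biUnion qsupp with hU
    have hUcard : w + t ≤ U.card := by
      by_contra hcon
      push_neg at hcon
      have hx0U : qsupp x0 ⊆ U := subset_biUnion_of_mem qsupp hx0
      have hUw : w ≤ U.card := (hw x0 hx0) ▸ card_le_card hx0U
      obtain ⟨K, hKU, hKcard⟩ := Finset.exists_subset_card_eq (s := U) (n := w-1) (by omega)
      have hT' : (U \ K).card = U.card - (w-1) := by rw [card_sdiff_of_subset hKU, hKcard]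
      obtain ⟨T, hT'T, hTcard⟩ := Finset.exists_superset_card_eq (s := U \ K)
        (n := t) (by omega) (by rw [Fintype.card_fin]; exact hn)
      obtain ⟨x, hxQ, hdisj⟩ := hA T hTcard
      have h1 : qsupp x ⊆ K := by
        intro j hj
        have hjU : j ∈ U := mem_biUnion.2 ⟨x, hxQ, hj⟩
        have hjT : j ∉ T := disjoint_left.1 hdisj hj
        have hjT' : j ∉ U \ K := fun h => hjT (hT'T h)
        rw [mem_sdiff] at hjT'
        tauto
      have h2 := card_le_card h1
      rw [hw x hxQ, hKcard] at h2
      omega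
    have hUD : U.card ≤ D.card := by
      apply card_le_card_of_injOn (fun j => {j})
      · intro j hj
        obtain ⟨x, hx, hjx⟩ := mem_biUnion.1 hj
        exact mem_biUnion.2 ⟨x, hx, mem_powersetCard.2
          ⟨singleton_subset_iff.2 hjx, card_singleton j⟩⟩
      · intro a _ b _ hab
        exact singleton_inj.1 hab
    rw [Nat.choose_one_right]
    omega
  · -- k ≥ 2
    have hkw : k < w := by omega
    by_cases hpair : ∃ x ∈ Q, ∃ y ∈ Q, (qsupp x ∩ qsupp y).card ≤ w - t - 1
    · obtain ⟨x, hx, y, hy, hxy⟩ := hpair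
      set A := (qsupp x).powersetCard k with hA'
      set B := (qsupp y).powersetCard k with hB'
      have hsubD : A ∪ B ⊆ D := by
        apply union_subset
        · exact fun K hK => mem_biUnion.2 ⟨x, hx, hK⟩
        · exact fun K hK => mem_biUnion.2 ⟨y, hy, hK⟩
      have hcap : (A ∩ B).card ≤ (w-t-1).choose k := by
        have hsub2 : A ∩ B ⊆ (qsupp x ∩ qsupp y).powersetCard k := by
          intro K hK
          rw [mem_inter] at hK
          obtain ⟨h1, h2⟩ := hK
          rw [mem_powersetCard] at h1 h2 ⊢
          exact ⟨subset_inter h1.1 h2.1, h1.2⟩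
        calc (A ∩ B).card ≤ ((qsupp x ∩ qsupp y).powersetCard k).card := card_le_card hsub2
          _ = (qsupp x ∩ qsupp y).card.choose k := card_powersetCard _ _
          _ ≤ (w-t-1).choose k := Nat.choose_le_choose k hxy
      have hAc : A.card = w.choose k := by rw [hA', card_powersetCard, hw x hx]
      have hBc : B.card = w.choose k := by rw [hB', card_powersetCard, hw y hy]
      have hUI := card_union_add_card_inter A B
      have hDge := card_le_card hsubD
      -- (A∪B).card + (A∩B).card = 2 * w.choose k ≥ hcond
      have h2w : A.card + B.card = 2 * w.choose k := by rw [hAc, hBc]; ring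
      omega
    · push_neg at hpair
      have h3t : 3 * t ≤ w := three_t_le_w ht hk2 hkw hcond
      have hb : ∀ x ∈ Q, ∀ y ∈ Q, w - t ≤ (qsupp x ∩ qsupp y).card := by
        intro x hx y hy
        have := hpair x hx y hy
        omega
      set S := qsupp x0 with hS
      have hSw : S.card = w := hw _ hx0
      -- key
      have key : ∀ T, T ⊆ S → T.card = t → ∃ U, (∀ a ∈ U, a ∉ S) ∧ U.card = t ∧
          ∃ z ∈ Q, qsupp z = (S \ T) ∪ U := by
        intro T hTS hTc
        obtain ⟨z, hz, hdisj⟩ := hA T hTc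
        have h1 : qsupp z ∩ S ⊆ S \ T := by
          intro j hj
          rw [mem_inter] at hj
          rw [mem_sdiff]
          exact ⟨hj.2, fun hT => disjoint_left.1 hdisj hj.1 hT⟩
        have h2 : w - t ≤ (qsupp z ∩ S).card := hb z hz x0 hx0
        have h3 : (S \ T).card = w - t := by rw [card_sdiff_of_subset hTS, hSw, hTc]
        have h4 : qsupp z ∩ S = S \ T := eq_of_subset_of_card_le h1 (by omega)
        refine ⟨qsupp z \ S, fun a ha => (mem_sdiff.1 ha).2, ?_, z, hz, ?_⟩
        · have h5 := card_inter_add_card_sdiff (qsupp z) S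
          rw [hw z hz, h4, h3] at h5
          omega
        · have h6 := Finset.sdiff_union_inter (qsupp z) S
          rw [Finset.union_comm, h4] at h6
          exact h6.symm
      -- pair comparison
      have pairU : ∀ T₁ T₂ U₁ U₂ z₁ z₂, T₁ ⊆ S → T₂ ⊆ S → T₁.card = t → T₂.card = t →
          Disjoint T₁ T₂ → (∀ a ∈ U₁, a ∉ S) → (∀ a ∈ U₂, a ∉ S) → U₁.card = t → U₂.card = t →
          z₁ ∈ Q → z₂ ∈ Q → qsupp z₁ = (S \ T₁) ∪ U₁ → qsupp z₂ = (S \ T₂) ∪ U₂ → U₁ = U₂ := by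
        intro T₁ T₂ U₁ U₂ z₁ z₂ hT₁S hT₂S hT₁c hT₂c hdisjT hU₁S hU₂S hU₁c hU₂c hz₁ hz₂ he₁ he₂
        have hcap : qsupp z₁ ∩ qsupp z₂ = (S \ (T₁ ∪ T₂)) ∪ (U₁ ∩ U₂) := by
          rw [he₁, he₂]
          ext a
          simp only [mem_inter, mem_union, mem_sdiff]
          have h1 := hU₁S a
          have h2 := hU₂S a
          tauto
        have hcard1 : (S \ (T₁ ∪ T₂)).card = w - 2*t := by
          rw [card_sdiff_of_subset (union_subset hT₁S hT₂S), hSw, card_union_of_disjoint hdisjT, hT₁c, hT₂c]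
          omega
        have hdisj2 : Disjoint (S \ (T₁ ∪ T₂)) (U₁ ∩ U₂) := by
          rw [disjoint_left]
          intro a ha hau
          exact hU₁S a (mem_inter.1 hau).1 (mem_sdiff.1 ha).1
        have h5 : w - t ≤ (qsupp z₁ ∩ qsupp z₂).card := hb z₁ hz₁ z₂ hz₂
        rw [hcap, card_union_of_disjoint hdisj2, hcard1] at h5
        have h6 : t ≤ (U₁ ∩ U₂).card := by omega
        have h7 : U₁ ∩ U₂ = U₁ := eq_of_subset_of_card_le inter_subset_left (by omega)
        have h8 : U₁ ∩ U₂ = U₂ := eq_of_subset_of_card_le inter_subset_right (by omega)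
        rw [← h7, h8]
      -- fixed T₀
      obtain ⟨T₀, hT₀S, hT₀c⟩ := Finset.exists_subset_card_eq (s := S) (n := t) (by omega)
      obtain ⟨U₀, hU₀S, hU₀c, z₀, hz₀, hz₀supp⟩ := key T₀ hT₀S hT₀c
      have Uconst : ∀ T U z, T ⊆ S → T.card = t → (∀ a ∈ U, a ∉ S) → U.card = t →
          z ∈ Q → qsupp z = (S \ T) ∪ U → U = U₀ := by
        intro T U z hTS hTc hUS hUc hzQ hzsupp
        have hcardrest : t ≤ (S \ (T ∪ T₀)).card := by
          have h1 : (T ∪ T₀).card ≤ 2*t := by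
            have := card_union_le T T₀
            omega
          have h2 := card_sdiff_of_subset (union_subset hTS hT₀S)
          rw [hSw] at h2
          have h3 : (T ∪ T₀).card ≤ w := by
            have := card_le_card (union_subset hTS hT₀S)
            omega
          omega
        obtain ⟨T'', hsub, hc''⟩ := Finset.exists_subset_card_eq (s := S \ (T ∪ T₀)) (n := t) hcardrest
        have hT''S : T'' ⊆ S := fun a ha => (mem_sdiff.1 (hsub ha)).1
        obtain ⟨U'', hU''S, hU''c, z'', hz'', hs''⟩ := key T'' hT''S hc''
        have d1 : Disjoint T T'' := by
          rw [disjoint_right]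
          intro a ha
          exact fun haT => (mem_sdiff.1 (hsub ha)).2 (mem_union_left _ haT)
        have d2 : Disjoint T₀ T'' := by
          rw [disjoint_right]
          intro a ha
          exact fun haT => (mem_sdiff.1 (hsub ha)).2 (mem_union_right _ haT)
        have e1 : U = U'' := pairU T T'' U U'' z z'' hTS hT''S hTc hc'' d1 hUS hU''S hUc hU''c hzQ hz'' hzsupp hs''
        have e2 : U₀ = U'' := pairU T₀ T'' U₀ U'' z₀ z'' hT₀S hT''S hT₀c hc'' d2 hU₀S hU''S hU₀c hU''c hz₀ hz'' hz₀supp hs''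
        rw [e1, ← e2]
      set W := S ∪ U₀ with hW
      have hdisjSU : Disjoint S U₀ := by
        rw [disjoint_right]
        exact hU₀S
      have hWcard : W.card = w + t := by
        rw [hW, card_union_of_disjoint hdisjSU, hSw, hU₀c]
      have hsubW : ∀ y ∈ Q, qsupp y ⊆ W := by
        intro y hyQ
        have ha : w - t ≤ (qsupp y ∩ S).card := hb y hyQ x0 hx0
        obtain ⟨T, hTsub, hTc⟩ := Finset.exists_subset_card_eq (s := qsupp y ∩ S) (n := t) (by omega)
        have hTS : T ⊆ S := hTsub.trans inter_subset_right
        have hTy : T ⊆ qsupp y := hTsub.trans inter_subset_left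
        obtain ⟨U, hUS, hUc, z, hz, hzsupp⟩ := key T hTS hTc
        have hUU₀ : U = U₀ := Uconst T U z hTS hTc hUS hUc hz hzsupp
        subst hUU₀
        have h5 : w - t ≤ (qsupp y ∩ qsupp z).card := hb y hyQ z hz
        have hsplit : qsupp y ∩ qsupp z = ((qsupp y ∩ S) \ T) ∪ (qsupp y ∩ U) := by
          rw [hzsupp]
          ext a
          simp only [mem_inter, mem_union, mem_sdiff]
          have h1 := hUS a
          constructor
          · rintro ⟨h2, h3 | h3⟩
            · exact Or.inl ⟨⟨h2, h3.1⟩, h3.2⟩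
            · exact Or.inr ⟨h2, h3⟩
          · rintro (⟨⟨h2, h3⟩, h4⟩ | ⟨h2, h3⟩)
            · exact ⟨h2, Or.inl ⟨h3, h4⟩⟩
            · exact ⟨h2, Or.inr h3⟩
        have hd : Disjoint ((qsupp y ∩ S) \ T) (qsupp y ∩ U) := by
          rw [disjoint_left]
          intro a haL haR
          exact hUS a (mem_inter.1 haR).2 (mem_inter.1 (mem_sdiff.1 haL).1).2
        have hc1 : ((qsupp y ∩ S) \ T).card = (qsupp y ∩ S).card - t := by
          rw [card_sdiff_of_subset hTsub, hTc]
        rw [hsplit, card_union_of_disjoint hd, hc1] at h5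
        have h8 : (qsupp y ∩ S).card + (qsupp y \ S).card = w := by
          rw [card_inter_add_card_sdiff, hw y hyQ]
        have h9 : qsupp y ∩ U ⊆ qsupp y \ S := by
          intro a haU
          rw [mem_inter] at haU
          rw [mem_sdiff]
          exact ⟨haU.1, hUS a haU.2⟩
        have h9c := card_le_card h9
        have haw : (qsupp y ∩ S).card ≤ w := by
          have hsub' : qsupp y ∩ S ⊆ S := inter_subset_right
          have := card_le_card hsub'
          rw [hSw] at this
          exact this
        have h10 : qsupp y ∩ U = qsupp y \ S := eq_of_subset_of_card_le h9 (by omega)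
        intro a haY
        rw [hW, mem_union]
        by_cases haS : a ∈ S
        · exact Or.inl haS
        · refine Or.inr ?_
          have : a ∈ qsupp y \ S := mem_sdiff.2 ⟨haY, haS⟩
          rw [← h10] at this
          exact (mem_inter.1 this).2
      -- final
      have hfin : W.powersetCard k ⊆ D := by
        intro K hK
        obtain ⟨hKW, hKc⟩ := mem_powersetCard.1 hK
        have hWK : t ≤ (W \ K).card := by
          rw [card_sdiff_of_subset hKW, hWcard, hKc]
          omega
        obtain ⟨T, hTsub, hTc⟩ := Finset.exists_subset_card_eq (s := W \ K) (n := t) hWK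
        obtain ⟨z, hz, hdisj⟩ := hA T hTc
        have hTW : T ⊆ W := fun a ha => (mem_sdiff.1 (hTsub ha)).1
        have h1 : qsupp z ⊆ W \ T := by
          rw [subset_sdiff]
          exact ⟨hsubW z hz, hdisj⟩
        have h2 : (W \ T).card = w := by
          rw [card_sdiff_of_subset hTW, hWcard, hTc]
          omega
        have h3 : qsupp z = W \ T := eq_of_subset_of_card_le h1 (by rw [h2, hw z hz])
        refine mem_biUnion.2 ⟨z, hz, mem_powersetCard.2 ⟨?_, hKc⟩⟩
        rw [h3, subset_sdiff]
        refine ⟨hKW, ?_⟩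
        rw [disjoint_right]
        intro a ha
        exact fun haK => (mem_sdiff.1 (hTsub ha)).2 haK
      calc (w+t).choose k = (W.powersetCard k).card := by rw [card_powersetCard, hWcard]
        _ ≤ D.card := card_le_card hfin

theorem qary_cpecc_upper_bound (q n t w e b : ℕ) (hq : 2 ≤ q) (ht : 1 ≤ t)
    (he : 1 ≤ e) (hew : e + 1 ≤ w)
    (hcond : (w - t - 1).choose (w - e) + (w + t).choose (w - e) ≤
      2 * w.choose (w - e))
    (hn : t ≤ n)
    (P : Fin b → Finset (Fin n → Fin q)) (hP : IsQaryLPECC q n t w e P)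
    (hconst : ∀ i, ∀ x ∈ P i, qwt x = w) :
    b * (w + t).choose (w - e) ≤ (q - 1) ^ (w - e) * n.choose (w - e) := by
  classical
  haveI : NeZero q := ⟨by omega⟩
  obtain ⟨hne, hdisjP, hA, hB, hC⟩ := hP
  set k := w - e with hk
  have hke : k + e = w := by omega
  have hk1 : 1 ≤ k := by omega
  set Sh : Fin b → Finset (Fin n → Fin q) := fun i =>
    univ.filter (fun z => qwt z = k ∧ ∃ x ∈ P i, ∀ j, z j = x j ∨ z j = 0) with hSh
  -- per-class lower bound
  have hclass : ∀ i, (w+t).choose k ≤ (Sh i).card := by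
    intro i
    have hshadow := class_shadow_bound ht he hk1 hke hn hcond (P i)
      (fun T hT => hA T hT i) (fun x hx => hconst i x hx)
    refine le_trans hshadow ?_
    apply card_le_card_of_surjOn qsupp
    intro K hK
    simp only [coe_biUnion, Set.mem_iUnion, mem_coe] at hK
    obtain ⟨x, hx, hKx⟩ := hK
    obtain ⟨hKsub, hKc⟩ := mem_powersetCard.1 hKx
    refine ⟨fun j => if j ∈ K then x j else 0, ?_, ?_⟩
    · simp only [mem_coe, hSh, mem_filter, mem_univ, true_and]
      constructor
      · show (qsupp _).card = k
        have : qsupp (fun j => if j ∈ K then x j else 0) = K := by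
          ext j
          rw [mem_qsupp]
          by_cases hj : j ∈ K
          · simp only [hj, if_pos, iff_true]
            exact (mem_qsupp.1 (hKsub hj))
          · simp [hj]
        rw [this]
        exact hKc
      · refine ⟨x, hx, fun j => ?_⟩
        by_cases hj : j ∈ K <;> simp [hj]
    · show qsupp _ = K
      ext j
      rw [mem_qsupp]
      by_cases hj : j ∈ K
      · simp only [hj, if_pos, iff_true]
        exact (mem_qsupp.1 (hKsub hj))
      · simp [hj]
  -- pairwise disjoint
  have hdist : ∀ (x z : Fin n → Fin q), (∀ j, z j = x j ∨ z j = 0) → qwt z = k →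
      qwt x = w → hammingDist x z ≤ e := by
    intro x z hsub hzk hxw
    have hsupp : qsupp z ⊆ qsupp x := by
      intro j hj
      rw [mem_qsupp] at hj ⊢
      rcases hsub j with h | h
      · rwa [h] at hj
      · rw [h] at hj; simp at hj
    have hdef : hammingDist x z = (univ.filter fun j => x j ≠ z j).card := rfl
    have hsub2 : (univ.filter fun j => x j ≠ z j) ⊆ qsupp x \ qsupp z := by
      intro j hj
      simp only [mem_filter, mem_univ, true_and] at hj
      rcases hsub j with h | h
      · exact absurd h.symm hj
      · rw [mem_sdiff, mem_qsupp, mem_qsupp]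
        constructor
        · intro hx0
          apply hj
          rw [h]
          exact (Fin.ext (by simp [hx0])).symm
        · rw [h]; simp
    have := card_le_card hsub2
    rw [card_sdiff_of_subset hsupp] at this
    rw [hdef]
    have hzc : (qsupp z).card = k := hzk
    have hxc : (qsupp x).card = w := hxw
    omega
  have hpairdisj : ∀ i j : Fin b, i ≠ j → Disjoint (Sh i) (Sh j) := by
    intro i j hij
    rw [disjoint_left]
    intro z hzi hzj
    simp only [hSh, mem_filter, mem_univ, true_and] at hzi hzj
    obtain ⟨hzk, x, hx, hxs⟩ := hzi
    obtain ⟨-, y, hy, hys⟩ := hzj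
    have d1 : hammingDist x z ≤ e := hdist x z hxs hzk (hconst i x hx)
    have d2 : hammingDist y z ≤ e := hdist y z hys hzk (hconst j y hy)
    have htri := hammingDist_triangle x z y
    rw [hammingDist_comm z y] at htri
    have := hC i j hij x hx y hy
    omega
  -- sum up
  have hsum : ∑ i, (Sh i).card = ((univ : Finset (Fin b)).biUnion Sh).card :=
    (card_biUnion (fun i _ j _ hij => hpairdisj i j hij)).symm
  have htot : ((univ : Finset (Fin b)).biUnion Sh).card ≤ (q-1)^k * n.choose k := by
    refine le_trans (card_le_card ?_) (total_count k hq)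
    intro z hz
    obtain ⟨i, -, hzi⟩ := mem_biUnion.1 hz
    simp only [hSh, mem_filter, mem_univ, true_and] at hzi
    exact mem_filter.2 ⟨mem_univ _, hzi.1⟩
  calc b * (w+t).choose k = ∑ _i : Fin b, (w+t).choose k := by
        rw [Finset.sum_const, card_univ, Fintype.card_fin, smul_eq_mul]
    _ ≤ ∑ i, (Sh i).card := Finset.sum_le_sum (fun i _ => hclass i)
    _ = ((univ : Finset (Fin b)).biUnion Sh).card := hsum
    _ ≤ (q-1)^k * n.choose k := htot
end
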